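/- arXiv:2212.00524 — 3 statements merged into one kernel-verified Lean document; each statement's English description precedes it below -/
import Mathlib

section
/- Let X₁, …, X_n be independent and identically distributed H-valued random variables with E‖X₁‖⁴ < ∞, and fix h ∈ H and x ∈ ℝ. With X̄_{x,h} := n⁻¹ Σ_{j=1}^n 1{⟨X_j,h⟩ ≤ x} X_j and E_{x,h} := E[1{⟨X₁,h⟩ ≤ x} X₁], one has E[⟨X₁, X̄_{x,h} − E_{x,h}⟩²] ≤ (2/n²) E‖X₁‖⁴ + ((4n−2)/n²) (E‖X₁‖²)². -/
open MeasureTheory ProbabilityTheory Filter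
open scoped RealInnerProductSpace

/-- For i.i.d. `H`-valued `X₁,…,X_n` with `E‖X₁‖⁴ < ∞`, fixed `h ∈ H`
and `x ∈ ℝ`, with `X̄_{x,h} = n⁻¹ ∑_j 1{⟨X_j,h⟩≤x} X_j` and
`E_{x,h} = E[1{⟨X₁,h⟩≤x} X₁]`, one has
`E⟨X₁, X̄_{x,h} − E_{x,h}⟩² ≤ (2/n²) E‖X₁‖⁴ + ((4n−2)/n²) (E‖X₁‖²)²`. -/
theorem projected_mean_second_moment_bound
    {Ω : Type*} [MeasureSpace Ω] [IsProbabilityMeasure (ℙ : Measure Ω)]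
    {H : Type*} [NormedAddCommGroup H] [InnerProductSpace ℝ H] [CompleteSpace H]
    [TopologicalSpace.SeparableSpace H] [MeasurableSpace H] [BorelSpace H]
    {n : ℕ} (hn : 1 ≤ n)
    (X : Fin n → Ω → H) (hXmeas : ∀ i, Measurable (X i))
    -- independent and identically distributed
    (hindep : iIndepFun X ℙ)
    (hident : ∀ i, Measure.map (X i) ℙ = Measure.map (X ⟨0, by omega⟩) ℙ)
    -- E‖X₁‖⁴ < ∞
    (hX4 : Integrable (fun ω => ‖X ⟨0, by omega⟩ ω‖ ^ 4) ℙ)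
    (h : H) (x : ℝ) :
    (∫ ω, ⟪X ⟨0, by omega⟩ ω,
        ((n : ℝ)⁻¹ • ∑ j : Fin n, (if ⟪X j ω, h⟫ ≤ x then X j ω else 0))
          - (∫ ω', (if ⟪X ⟨0, by omega⟩ ω', h⟫ ≤ x then X ⟨0, by omega⟩ ω' else 0) ∂ℙ)⟫ ^ 2 ∂ℙ)
      ≤ (2 / (n : ℝ) ^ 2) * (∫ ω, ‖X ⟨0, by omega⟩ ω‖ ^ 4 ∂ℙ)
        + ((4 * (n : ℝ) - 2) / (n : ℝ) ^ 2) * (∫ ω, ‖X ⟨0, by omega⟩ ω‖ ^ 2 ∂ℙ) ^ 2 := by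
  classical
  haveI : SecondCountableTopology H := UniformSpace.secondCountable_of_separable H
  have hn0 : (n : ℝ) ≠ 0 := Nat.cast_ne_zero.mpr (by omega)
  set i0 : Fin n := ⟨0, by omega⟩ with hi0def
  set f : H → H := fun a => if ⟪a, h⟫ ≤ x then a else 0 with hfdef
  have hfmeas : Measurable f := by
    apply Measurable.ite _ measurable_id measurable_const
    exact measurableSet_le ((continuous_id.inner continuous_const).measurable) measurable_const
  have hfnorm : ∀ a : H, ‖f a‖ ≤ ‖a‖ := by
    intro a; by_cases hc : ⟪a, h⟫ ≤ x <;> simp [hfdef, hc]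
  -- transfer lemmas using identical distribution
  have hInt_transfer : ∀ (i : Fin n) (g : H → ℝ), Measurable g →
      Integrable (fun ω => g (X i0 ω)) ℙ → Integrable (fun ω => g (X i ω)) ℙ := by
    intro i g hg hint
    have h1 : Integrable g (Measure.map (X i) ℙ) := by
      rw [hident i]
      exact (integrable_map_measure hg.aestronglyMeasurable (hXmeas i0).aemeasurable).mpr hint
    exact (integrable_map_measure hg.aestronglyMeasurable (hXmeas i).aemeasurable).mp h1
  have hEq_transfer : ∀ (i : Fin n) (g : H → ℝ), Measurable g →
      ∫ ω, g (X i ω) ∂ℙ = ∫ ω, g (X i0 ω) ∂ℙ := by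
    intro i g hg
    rw [← integral_map (hXmeas i).aemeasurable hg.aestronglyMeasurable, hident i,
      integral_map (hXmeas i0).aemeasurable hg.aestronglyMeasurable]
  -- integrability of norm powers
  have hX4i : ∀ i, Integrable (fun ω => ‖X i ω‖ ^ 4) ℙ := by
    intro i
    exact hInt_transfer i (fun a => ‖a‖ ^ 4) (measurable_norm.pow_const 4) hX4
  have hX2i : ∀ i, Integrable (fun ω => ‖X i ω‖ ^ 2) ℙ := by
    intro i
    refine ((integrable_const (1:ℝ)).add (hX4i i)).mono'
      ((hXmeas i).norm.pow_const 2).aestronglyMeasurable (ae_of_all _ fun ω => ?_)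
    have h0 : (0:ℝ) ≤ ‖X i ω‖ := norm_nonneg _
    rw [Real.norm_eq_abs, abs_of_nonneg (by positivity)]
    simp only [Pi.add_apply]
    nlinarith [sq_nonneg (‖X i ω‖ ^ 2 - 1)]
  have hX1i : ∀ i, Integrable (fun ω => ‖X i ω‖) ℙ := by
    intro i
    refine ((integrable_const (1:ℝ)).add (hX2i i)).mono'
      (hXmeas i).norm.aestronglyMeasurable (ae_of_all _ fun ω => ?_)
    have h0 : (0:ℝ) ≤ ‖X i ω‖ := norm_nonneg _
    rw [Real.norm_eq_abs, abs_of_nonneg h0]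
    simp only [Pi.add_apply]
    nlinarith [sq_nonneg (‖X i ω‖ - 1)]
  set M4 : ℝ := ∫ ω, ‖X i0 ω‖ ^ 4 ∂ℙ with hM4def
  set M2 : ℝ := ∫ ω, ‖X i0 ω‖ ^ 2 ∂ℙ with hM2def
  have hM2nonneg : 0 ≤ M2 := integral_nonneg fun ω => by positivity
  have hX2eq : ∀ i, ∫ ω, ‖X i ω‖ ^ 2 ∂ℙ = M2 := fun i =>
    hEq_transfer i (fun a => ‖a‖ ^ 2) (measurable_norm.pow_const 2)
  -- Y and its mean
  have hYint : ∀ i, Integrable (fun ω => f (X i ω)) ℙ := by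
    intro i
    refine (hX1i i).mono' (hfmeas.comp (hXmeas i)).aestronglyMeasurable
      (ae_of_all _ fun ω => hfnorm _)
  set μH : H := ∫ ω, f (X i0 ω) ∂ℙ with hμHdef
  have hμeq : ∀ i, ∫ ω, f (X i ω) ∂ℙ = μH := by
    intro i
    rw [hμHdef, ← integral_map (hXmeas i).aemeasurable hfmeas.stronglyMeasurable.aestronglyMeasurable,
      hident i, integral_map (hXmeas i0).aemeasurable hfmeas.stronglyMeasurable.aestronglyMeasurable]
  have hμnorm : ‖μH‖ ^ 2 ≤ M2 := by
    have h1 : ‖μH‖ ≤ ∫ ω, ‖X i0 ω‖ ∂ℙ := by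
      refine (norm_integral_le_integral_norm _).trans ?_
      exact integral_mono (hYint i0).norm (hX1i i0) fun ω => hfnorm _
    have h2 : (∫ ω, ‖X i0 ω‖ ∂ℙ) ^ 2 ≤ M2 := by
      have hmem : MemLp (fun ω => ‖X i0 ω‖) 2 ℙ :=
        (memLp_two_iff_integrable_sq (hXmeas i0).norm.aestronglyMeasurable).mpr (hX2i i0)
      have hv := variance_nonneg (fun ω => ‖X i0 ω‖) ℙ
      rw [variance_eq_sub hmem] at hv
      have : (∫ ω, ‖X i0 ω‖ ∂ℙ) ^ 2 ≤ ∫ ω, ‖X i0 ω‖ ^ 2 ∂ℙ := by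
        simpa [Pi.pow_apply] using hv
      simpa [hM2def] using this
    calc ‖μH‖ ^ 2 ≤ (∫ ω, ‖X i0 ω‖ ∂ℙ) ^ 2 := by
          apply pow_le_pow_left₀ (norm_nonneg _) h1
      _ ≤ M2 := h2
  -- the centered projections
  set Z : Fin n → Ω → ℝ := fun j ω => ⟪X i0 ω, f (X j ω) - μH⟫ with hZdef
  have hZmeas : ∀ j, Measurable (Z j) := fun j =>
    (hXmeas i0).inner ((hfmeas.comp (hXmeas j)).sub measurable_const)
  have hZabs : ∀ j ω, |Z j ω| ≤ ‖X i0 ω‖ * (‖X j ω‖ + ‖μH‖) := by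
    intro j ω
    refine (abs_real_inner_le_norm _ _).trans ?_
    have : ‖f (X j ω) - μH‖ ≤ ‖X j ω‖ + ‖μH‖ :=
      (norm_sub_le _ _).trans (by gcongr; exact hfnorm _)
    exact mul_le_mul_of_nonneg_left this (norm_nonneg _)
  have hZsq_le : ∀ j ω, Z j ω ^ 2 ≤ ‖X i0 ω‖ ^ 2 * (2 * ‖X j ω‖ ^ 2 + 2 * ‖μH‖ ^ 2) := by
    intro j ω
    have h1 := hZabs j ω
    have h2 : Z j ω ^ 2 = |Z j ω| ^ 2 := (sq_abs _).symm
    rw [h2]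
    have h3 : |Z j ω| ^ 2 ≤ (‖X i0 ω‖ * (‖X j ω‖ + ‖μH‖)) ^ 2 :=
      pow_le_pow_left₀ (abs_nonneg _) h1 2
    refine h3.trans ?_
    have := sq_nonneg (‖X j ω‖ - ‖μH‖)
    nlinarith [sq_nonneg (‖X i0 ω‖), norm_nonneg (X i0 ω)]
  have hZsq_int : ∀ j, Integrable (fun ω => Z j ω ^ 2) ℙ := by
    intro j
    refine (((hX4i i0).add (hX4i j)).add ((hX2i i0).const_mul (2 * ‖μH‖ ^ 2))).mono'
      ((hZmeas j).pow_const 2).aestronglyMeasurable (ae_of_all _ fun ω => ?_)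
    rw [Real.norm_eq_abs, abs_of_nonneg (sq_nonneg _)]
    have h1 := hZsq_le j ω
    have h2 : ‖X i0 ω‖ ^ 2 * (2 * ‖X j ω‖ ^ 2) ≤ ‖X i0 ω‖ ^ 4 + ‖X j ω‖ ^ 4 := by
      nlinarith [sq_nonneg (‖X i0 ω‖ ^ 2 - ‖X j ω‖ ^ 2), sq_nonneg (‖X i0 ω‖ ^ 2 + ‖X j ω‖ ^ 2)]
    simp only [Pi.add_apply]
    nlinarith [sq_nonneg (‖X i0 ω‖)]
  have hZZ_int : ∀ j k, Integrable (fun ω => Z j ω * Z k ω) ℙ := by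
    intro j k
    refine ((hZsq_int j).add (hZsq_int k)).mono'
      ((hZmeas j).mul (hZmeas k)).aestronglyMeasurable (ae_of_all _ fun ω => ?_)
    simp only [Pi.add_apply, Real.norm_eq_abs]
    rw [abs_mul]
    nlinarith [sq_nonneg (|Z j ω| - |Z k ω|), abs_nonneg (Z j ω), abs_nonneg (Z k ω),
      sq_abs (Z j ω), sq_abs (Z k ω)]
  -- cross terms vanish
  have cross : ∀ j k : Fin n, k ≠ i0 → k ≠ j → ∫ ω, Z j ω * Z k ω ∂ℙ = 0 := by
    intro j k hk0 hkj
    set V : Ω → H × H := fun ω => (X i0 ω, X j ω) with hVdef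
    have hVmeas : Measurable V := (hXmeas i0).prodMk (hXmeas j)
    have hindepVW : IndepFun V (X k) ℙ :=
      hindep.indepFun_prodMk hXmeas i0 j k (Ne.symm hk0) (Ne.symm hkj)
    set G : (H × H) × H → ℝ := fun p => ⟪p.1.1, f p.1.2 - μH⟫ * ⟪p.1.1, f p.2 - μH⟫ with hGdef
    have hGmeas : Measurable G := by
      apply Measurable.mul
      · exact (measurable_fst.comp measurable_fst).inner
          ((hfmeas.comp (measurable_snd.comp measurable_fst)).sub measurable_const)
      · exact (measurable_fst.comp measurable_fst).inner
          ((hfmeas.comp measurable_snd).sub measurable_const)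
    have hpairmeas : Measurable (fun ω => (V ω, X k ω)) := hVmeas.prodMk (hXmeas k)
    have hmapeq : Measure.map (fun ω => (V ω, X k ω)) ℙ
        = (Measure.map V ℙ).prod (Measure.map (X k) ℙ) :=
      (indepFun_iff_map_prod_eq_prod_map_map hVmeas.aemeasurable (hXmeas k).aemeasurable).mp
        hindepVW
    haveI : IsProbabilityMeasure (Measure.map (X k) ℙ) :=
      Measure.isProbabilityMeasure_map (hXmeas k).aemeasurable
    haveI : IsProbabilityMeasure (Measure.map V ℙ) :=
      Measure.isProbabilityMeasure_map hVmeas.aemeasurable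
    have hGint : Integrable G ((Measure.map V ℙ).prod (Measure.map (X k) ℙ)) := by
      rw [← hmapeq]
      exact (integrable_map_measure hGmeas.aestronglyMeasurable hpairmeas.aemeasurable).mpr
        (hZZ_int j k)
    have hfk_int : Integrable f (Measure.map (X k) ℙ) :=
      (integrable_map_measure hfmeas.stronglyMeasurable.aestronglyMeasurable
        (hXmeas k).aemeasurable).mpr (hYint k)
    have hfk_mean : ∫ w, f w ∂(Measure.map (X k) ℙ) = μH := by
      rw [integral_map (hXmeas k).aemeasurable hfmeas.stronglyMeasurable.aestronglyMeasurable]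
      exact hμeq k
    have hinner_zero : ∀ a : H, ∫ w, ⟪a, f w - μH⟫ ∂(Measure.map (X k) ℙ) = 0 := by
      intro a
      have hsub : Integrable (fun w => f w - μH) (Measure.map (X k) ℙ) :=
        hfk_int.sub (integrable_const μH)
      rw [integral_inner hsub a,
        integral_sub hfk_int (integrable_const μH), hfk_mean, integral_const]
      simp
    calc ∫ ω, Z j ω * Z k ω ∂ℙ
        = ∫ p, G p ∂(Measure.map (fun ω => (V ω, X k ω)) ℙ) :=
          (integral_map hpairmeas.aemeasurable hGmeas.aestronglyMeasurable).symm
      _ = ∫ p, G p ∂((Measure.map V ℙ).prod (Measure.map (X k) ℙ)) := by rw [hmapeq]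
      _ = ∫ v, ∫ w, G (v, w) ∂(Measure.map (X k) ℙ) ∂(Measure.map V ℙ) :=
          integral_prod _ hGint
      _ = 0 := by
          have : ∀ v : H × H, ∫ w, G (v, w) ∂(Measure.map (X k) ℙ) = 0 := by
            intro v
            simp only [hGdef]
            rw [integral_const_mul, hinner_zero v.1, mul_zero]
          simp [this]
  have cross' : ∀ j k : Fin n, j ≠ k → ∫ ω, Z j ω * Z k ω ∂ℙ = 0 := by
    intro j k hjk
    by_cases hk : k = i0
    · subst hk
      have h0 := cross i0 j hjk hjk
      calc ∫ ω, Z j ω * Z i0 ω ∂ℙ = ∫ ω, Z i0 ω * Z j ω ∂ℙ := by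
            refine integral_congr_ae (ae_of_all _ fun ω => ?_)
            exact mul_comm _ _
        _ = 0 := h0
    · exact cross j k hk (Ne.symm hjk)
  -- diagonal bounds
  have hdiag_bound : ∀ j : Fin n,
      ∫ ω, Z j ω ^ 2 ∂ℙ ≤ 2 * (∫ ω, ‖X i0 ω‖ ^ 2 * ‖X j ω‖ ^ 2 ∂ℙ) + 2 * M2 * M2 := by
    intro j
    have hint2 : Integrable (fun ω => ‖X i0 ω‖ ^ 2 * ‖X j ω‖ ^ 2) ℙ := by
      refine ((hX4i i0).add (hX4i j)).mono'
        (((hXmeas i0).norm.pow_const 2).mul ((hXmeas j).norm.pow_const 2)).aestronglyMeasurable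
        (ae_of_all _ fun ω => ?_)
      rw [Real.norm_eq_abs, abs_of_nonneg (by positivity)]
      simp only [Pi.add_apply]
      nlinarith [sq_nonneg (‖X i0 ω‖ ^ 2 - ‖X j ω‖ ^ 2)]
    have hintRHS : Integrable
        (fun ω => ‖X i0 ω‖ ^ 2 * (2 * ‖X j ω‖ ^ 2 + 2 * ‖μH‖ ^ 2)) ℙ := by
      have : (fun ω => ‖X i0 ω‖ ^ 2 * (2 * ‖X j ω‖ ^ 2 + 2 * ‖μH‖ ^ 2))
          = fun ω => 2 * (‖X i0 ω‖ ^ 2 * ‖X j ω‖ ^ 2) + (2 * ‖μH‖ ^ 2) * ‖X i0 ω‖ ^ 2 := by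
        funext ω; ring
      rw [this]
      exact (hint2.const_mul 2).add ((hX2i i0).const_mul _)
    have h1 : ∫ ω, Z j ω ^ 2 ∂ℙ
        ≤ ∫ ω, ‖X i0 ω‖ ^ 2 * (2 * ‖X j ω‖ ^ 2 + 2 * ‖μH‖ ^ 2) ∂ℙ :=
      integral_mono (hZsq_int j) hintRHS fun ω => hZsq_le j ω
    have h2 : ∫ ω, ‖X i0 ω‖ ^ 2 * (2 * ‖X j ω‖ ^ 2 + 2 * ‖μH‖ ^ 2) ∂ℙ
        = 2 * (∫ ω, ‖X i0 ω‖ ^ 2 * ‖X j ω‖ ^ 2 ∂ℙ) + 2 * ‖μH‖ ^ 2 * M2 := by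
      have : (fun ω => ‖X i0 ω‖ ^ 2 * (2 * ‖X j ω‖ ^ 2 + 2 * ‖μH‖ ^ 2))
          = fun ω => 2 * (‖X i0 ω‖ ^ 2 * ‖X j ω‖ ^ 2) + (2 * ‖μH‖ ^ 2) * ‖X i0 ω‖ ^ 2 := by
        funext ω; ring
      rw [this, integral_add (hint2.const_mul 2) ((hX2i i0).const_mul _),
        integral_const_mul, integral_const_mul, hM2def]
    have h3 : 2 * ‖μH‖ ^ 2 * M2 ≤ 2 * M2 * M2 := by nlinarith [hμnorm, hM2nonneg]
    linarith
  have hdiag0 : ∫ ω, Z i0 ω ^ 2 ∂ℙ ≤ 2 * M4 + 2 * M2 * M2 := by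
    have h1 := hdiag_bound i0
    have h2 : ∫ ω, ‖X i0 ω‖ ^ 2 * ‖X i0 ω‖ ^ 2 ∂ℙ = M4 := by
      rw [hM4def]
      congr 1; funext ω; ring
    rw [h2] at h1; linarith
  have hdiagj : ∀ j : Fin n, j ≠ i0 → ∫ ω, Z j ω ^ 2 ∂ℙ ≤ 4 * (M2 * M2) := by
    intro j hj
    have h1 := hdiag_bound j
    have hIF : IndepFun (fun ω => ‖X i0 ω‖ ^ 2) (fun ω => ‖X j ω‖ ^ 2) ℙ :=
      (hindep.indepFun (Ne.symm hj)).comp (measurable_norm.pow_const 2)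
        (measurable_norm.pow_const 2)
    have h2 : ∫ ω, ‖X i0 ω‖ ^ 2 * ‖X j ω‖ ^ 2 ∂ℙ = M2 * M2 := by
      have hmul := hIF.integral_fun_mul_eq_mul_integral (hX2i i0).aestronglyMeasurable (hX2i j).aestronglyMeasurable
      have h2' : ∫ ω, ‖X i0 ω‖ ^ 2 * ‖X j ω‖ ^ 2 ∂ℙ
          = (∫ ω, ‖X i0 ω‖ ^ 2 ∂ℙ) * ∫ ω, ‖X j ω‖ ^ 2 ∂ℙ := hmul
      rw [h2', hX2eq j, hM2def]
    rw [h2] at h1; linarith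
  -- pointwise expansion of the integrand
  have hpt : ∀ ω : Ω, ⟪X i0 ω,
      ((n : ℝ)⁻¹ • ∑ j : Fin n, (if ⟪X j ω, h⟫ ≤ x then X j ω else 0)) - μH⟫ ^ 2
      = ((n : ℝ) ^ 2)⁻¹ * ∑ j : Fin n, ∑ k : Fin n, Z j ω * Z k ω := by
    intro ω
    have hsum : ((n : ℝ)⁻¹ • ∑ j : Fin n, f (X j ω)) - μH
        = (n : ℝ)⁻¹ • ∑ j : Fin n, (f (X j ω) - μH) := by
      rw [Finset.sum_sub_distrib, smul_sub, Finset.sum_const, Finset.card_univ,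
        Fintype.card_fin, ← Nat.cast_smul_eq_nsmul ℝ n μH, smul_smul,
        inv_mul_cancel₀ hn0, one_smul]
    show ⟪X i0 ω, ((n : ℝ)⁻¹ • ∑ j : Fin n, f (X j ω)) - μH⟫ ^ 2 = _
    rw [hsum, real_inner_smul_right, inner_sum, mul_pow, ← Finset.sum_mul_sum]
    simp only [hZdef]
    rw [← inv_pow]
    ring
  -- put everything together
  have hmain : (∫ ω, ⟪X i0 ω,
      ((n : ℝ)⁻¹ • ∑ j : Fin n, (if ⟪X j ω, h⟫ ≤ x then X j ω else 0)) - μH⟫ ^ 2 ∂ℙ)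
      = ((n : ℝ) ^ 2)⁻¹ * ∑ j : Fin n, ∫ ω, Z j ω ^ 2 ∂ℙ := by
    rw [integral_congr_ae (ae_of_all _ hpt), integral_const_mul]
    congr 1
    rw [integral_finset_sum _ fun j _ => integrable_finset_sum _ fun k _ => hZZ_int j k]
    refine Finset.sum_congr rfl fun j _ => ?_
    rw [integral_finset_sum _ fun k _ => hZZ_int j k]
    rw [Finset.sum_eq_single j]
    · congr 1; funext ω; ring
    · intro k _ hkj; exact cross' j k (Ne.symm hkj)
    · intro hj; exact absurd (Finset.mem_univ j) hj
  have hsum_bound : ∑ j : Fin n, ∫ ω, Z j ω ^ 2 ∂ℙ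
      ≤ 2 * M4 + 2 * M2 * M2 + ((n : ℝ) - 1) * (4 * (M2 * M2)) := by
    rw [← Finset.add_sum_erase Finset.univ _ (Finset.mem_univ i0)]
    have hcard : ((Finset.univ.erase i0).card : ℝ) = (n : ℝ) - 1 := by
      rw [Finset.card_erase_of_mem (Finset.mem_univ i0), Finset.card_univ, Fintype.card_fin]
      push_cast [Nat.cast_sub hn]
      ring
    have h2 : ∑ j ∈ Finset.univ.erase i0, ∫ ω, Z j ω ^ 2 ∂ℙ
        ≤ ∑ j ∈ Finset.univ.erase i0, 4 * (M2 * M2) := by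
      refine Finset.sum_le_sum fun j hj => ?_
      exact hdiagj j (Finset.ne_of_mem_erase hj)
    rw [Finset.sum_const, nsmul_eq_mul] at h2
    rw [hcard] at h2
    linarith [hdiag0]
  calc (∫ ω, ⟪X i0 ω,
      ((n : ℝ)⁻¹ • ∑ j : Fin n, (if ⟪X j ω, h⟫ ≤ x then X j ω else 0)) - μH⟫ ^ 2 ∂ℙ)
      = ((n : ℝ) ^ 2)⁻¹ * ∑ j : Fin n, ∫ ω, Z j ω ^ 2 ∂ℙ := hmain
    _ ≤ ((n : ℝ) ^ 2)⁻¹ * (2 * M4 + 2 * M2 * M2 + ((n : ℝ) - 1) * (4 * (M2 * M2))) := by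
        apply mul_le_mul_of_nonneg_left hsum_bound
        positivity
    _ = (2 / (n : ℝ) ^ 2) * M4 + ((4 * (n : ℝ) - 2) / (n : ℝ) ^ 2) * M2 ^ 2 := by
        have hne : ((n : ℝ) ^ 2) ≠ 0 := pow_ne_zero 2 hn0
        rw [inv_mul_eq_div, div_mul_eq_mul_div, div_mul_eq_mul_div, ← add_div,
          div_eq_div_iff hne hne]
        ring
    _ ≤ _ := le_of_eq rfl
end

section
/- Let (X_i, Z_i), i = 1, …, n, be independent and identically distributed pairs, where each X_i is H-valued with E‖X₁‖⁴ < ∞ and each Z_i is ℝᵖ-valued with E‖Z₁‖² < ∞; fix h ∈ H and x ∈ ℝ. With X̄_{x,h} := n⁻¹ Σ_{j=1}^n 1{⟨X_j,h⟩ ≤ x} X_j and E_{x,h} := E[1{⟨X₁,h⟩ ≤ x} X₁], one has E‖ n⁻¹ Σ_{i=1}^n ⟨X_i, X̄_{x,h} − E_{x,h}⟩ Z_i ‖ ≤ ( (2/n²) E‖X₁‖⁴ + ((4n−2)/n²) (E‖X₁‖²)² )^{1/2} · (E‖Z₁‖²)^{1/2}. In particular, this expectation tends to 0 as n → ∞,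 so n⁻¹ Σ_{i=1}^n ⟨X_i, X̄_{x,h} − E_{x,h}⟩ Z_i converges to 0 in probability. -/
open MeasureTheory ProbabilityTheory Filter
open scoped RealInnerProductSpace

section Helpers

lemma amgm4 {a b c d : ℝ} (ha : 0 ≤ a) (hb : 0 ≤ b) (hc : 0 ≤ c) (hd : 0 ≤ d) :
    a * b * c * d ≤ (a ^ 4 + b ^ 4 + c ^ 4 + d ^ 4) / 4 := by
  nlinarith [sq_nonneg (a*b - c*d), sq_nonneg (a^2 - b^2), sq_nonneg (c^2 - d^2),
    mul_nonneg ha hb, mul_nonneg hc hd, sq_nonneg (a - b), sq_nonneg (c - d)]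

/-- algebra: `a²(b+c)(d+c) ≤ (1+c)²((1+a)⁴+(1+b)⁴+(1+d)⁴)` for nonnegative reals. -/
lemma alg_quartic {a b d c : ℝ} (ha : 0 ≤ a) (hb : 0 ≤ b) (hd : 0 ≤ d) (hc : 0 ≤ c) :
    a ^ 2 * ((b + c) * (d + c)) ≤ (1 + c) ^ 2 * ((1 + a) ^ 4 + (1 + b) ^ 4 + (1 + d) ^ 4) := by
  have h1 : a ^ 2 * ((b + c) * (d + c))
      ≤ ((1 + a) * (1 + a)) * (((1 + c) * (1 + b)) * ((1 + c) * (1 + d))) := by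
    have e1 : a ^ 2 ≤ (1 + a) * (1 + a) := by nlinarith
    have e2 : b + c ≤ (1 + c) * (1 + b) := by nlinarith [mul_nonneg hc hb]
    have e3 : d + c ≤ (1 + c) * (1 + d) := by nlinarith [mul_nonneg hc hd]
    have e4 : (0:ℝ) ≤ b + c := by linarith
    have e5 : (0:ℝ) ≤ d + c := by linarith
    have := mul_le_mul e2 e3 e5 (by nlinarith [mul_nonneg hc hb])
    exact mul_le_mul e1 this (by positivity) (by positivity)
  have h2 : (1 + a) * (1 + a) * ((1 + b) * (1 + d))
      ≤ (1 + a) ^ 4 + (1 + b) ^ 4 + (1 + d) ^ 4 := by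
    have := amgm4 (a := 1 + a) (b := 1 + a) (c := 1 + b) (d := 1 + d)
      (by linarith) (by linarith) (by linarith) (by linarith)
    have hA : (0:ℝ) ≤ (1 + a) ^ 4 := by positivity
    have hB : (0:ℝ) ≤ (1 + b) ^ 4 := by positivity
    have hD : (0:ℝ) ≤ (1 + d) ^ 4 := by positivity
    nlinarith [this]
  calc a ^ 2 * ((b + c) * (d + c))
      ≤ ((1 + a) * (1 + a)) * (((1 + c) * (1 + b)) * ((1 + c) * (1 + d))) := h1
    _ = (1 + c) ^ 2 * ((1 + a) * (1 + a) * ((1 + b) * (1 + d))) := by ring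
    _ ≤ (1 + c) ^ 2 * ((1 + a) ^ 4 + (1 + b) ^ 4 + (1 + d) ^ 4) := by
        exact mul_le_mul_of_nonneg_left h2 (by positivity)

/-- algebra: `a²(b+c) ≤ (1+c)((1+a)⁴+(1+b)⁴+1)` for nonnegative reals. -/
lemma alg_cubic {a b c : ℝ} (ha : 0 ≤ a) (hb : 0 ≤ b) (hc : 0 ≤ c) :
    a ^ 2 * (b + c) ≤ (1 + c) * ((1 + a) ^ 4 + (1 + b) ^ 4 + 1) := by
  have h1 : a ^ 2 * (b + c) ≤ ((1 + a) * (1 + a)) * ((1 + c) * (1 + b)) := by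
    have e1 : a ^ 2 ≤ (1 + a) * (1 + a) := by nlinarith
    have e2 : b + c ≤ (1 + c) * (1 + b) := by nlinarith [mul_nonneg hc hb]
    exact mul_le_mul e1 e2 (by linarith) (by positivity)
  have h2 : (1 + a) * (1 + a) * ((1 + b) * 1)
      ≤ (1 + a) ^ 4 + (1 + b) ^ 4 + 1 := by
    have := amgm4 (a := 1 + a) (b := 1 + a) (c := 1 + b) (d := 1)
      (by linarith) (by linarith) (by linarith) (by norm_num)
    have hA : (0:ℝ) ≤ (1 + a) ^ 4 := by positivity
    have hB : (0:ℝ) ≤ (1 + b) ^ 4 := by positivity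
    nlinarith [this]
  calc a ^ 2 * (b + c) ≤ ((1 + a) * (1 + a)) * ((1 + c) * (1 + b)) := h1
    _ = (1 + c) * ((1 + a) * (1 + a) * ((1 + b) * 1)) := by ring
    _ ≤ (1 + c) * ((1 + a) ^ 4 + (1 + b) ^ 4 + 1) :=
        mul_le_mul_of_nonneg_left h2 (by linarith)

lemma integral_cs {α : Type*} [MeasurableSpace α] {μ : Measure α} {f g : α → ℝ}
    (hf0 : ∀ a, 0 ≤ f a) (hg0 : ∀ a, 0 ≤ g a)
    (hfm : AEStronglyMeasurable f μ) (hgm : AEStronglyMeasurable g μ)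
    (hf2 : Integrable (fun a => f a ^ 2) μ) (hg2 : Integrable (fun a => g a ^ 2) μ) :
    ∫ a, f a * g a ∂μ ≤ Real.sqrt (∫ a, f a ^ 2 ∂μ) * Real.sqrt (∫ a, g a ^ 2 ∂μ) := by
  have ha0 : 0 ≤ ∫ a, f a ^ 2 ∂μ := integral_nonneg fun a => sq_nonneg _
  have hb0 : 0 ≤ ∫ a, g a ^ 2 ∂μ := integral_nonneg fun a => sq_nonneg _
  have hfg : Integrable (fun a => f a * g a) μ := by
    refine Integrable.mono' ((hf2.add hg2).div_const 2) (hfm.mul hgm) ?_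
    filter_upwards with a
    have := hf0 a; have := hg0 a
    rw [Real.norm_of_nonneg (by positivity)]
    simp only [Pi.add_apply, Pi.div_apply]
    nlinarith [sq_nonneg (f a - g a)]
  rcases eq_or_lt_of_le ha0 with ha | ha
  · have hz : (fun a => f a ^ 2) =ᵐ[μ] 0 :=
      (integral_eq_zero_iff_of_nonneg (fun a => sq_nonneg _) hf2).mp ha.symm
    have : (fun a => f a * g a) =ᵐ[μ] 0 := by
      filter_upwards [hz] with a haz
      have : f a = 0 := by
        have : f a ^ 2 = 0 := haz
        exact pow_eq_zero_iff (by norm_num) |>.mp this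
      simp [this]
    rw [integral_congr_ae this]
    simp only [Pi.zero_apply, integral_zero]
    positivity
  rcases eq_or_lt_of_le hb0 with hb | hb
  · have hz : (fun a => g a ^ 2) =ᵐ[μ] 0 :=
      (integral_eq_zero_iff_of_nonneg (fun a => sq_nonneg _) hg2).mp hb.symm
    have : (fun a => f a * g a) =ᵐ[μ] 0 := by
      filter_upwards [hz] with a haz
      have : g a = 0 := pow_eq_zero_iff (two_ne_zero) |>.mp haz
      simp [this]
    rw [integral_congr_ae this]
    simp only [Pi.zero_apply, integral_zero]
    positivity
  · set A := ∫ a, f a ^ 2 ∂μ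
    set B := ∫ a, g a ^ 2 ∂μ
    have hsA : 0 < Real.sqrt A := Real.sqrt_pos.mpr ha
    have hsB : 0 < Real.sqrt B := Real.sqrt_pos.mpr hb
    set t := Real.sqrt B / Real.sqrt A with ht
    set s := Real.sqrt A / Real.sqrt B with hs
    have hts : 0 < t := by positivity
    have hss : 0 < s := by positivity
    have key : ∀ a, f a * g a ≤ (t * f a ^ 2 + s * g a ^ 2) / 2 := by
      intro a
      have h1 : t * s = 1 := by
        rw [ht, hs, div_mul_div_comm, mul_comm]; exact div_self (by positivity)
      nlinarith [sq_nonneg (t * f a - g a), mul_nonneg hts.le (sq_nonneg (f a)),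
        hf0 a, hg0 a, mul_pos hts hss]
    calc ∫ a, f a * g a ∂μ ≤ ∫ a, (t * f a ^ 2 + s * g a ^ 2) / 2 ∂μ := by
          refine integral_mono hfg ?_ key
          exact ((hf2.const_mul t).add (hg2.const_mul s)).div_const 2
      _ = (t * A + s * B) / 2 := by
          rw [integral_div, integral_add (hf2.const_mul t) (hg2.const_mul s),
            integral_const_mul, integral_const_mul]
      _ = Real.sqrt A * Real.sqrt B := by
          have hA : Real.sqrt A * Real.sqrt A = A := Real.mul_self_sqrt ha0
          have hB : Real.sqrt B * Real.sqrt B = B := Real.mul_self_sqrt hb0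
          have e1 : t * A = Real.sqrt A * Real.sqrt B := by
            calc t * A = Real.sqrt B / Real.sqrt A * (Real.sqrt A * Real.sqrt A) := by rw [hA]
              _ = Real.sqrt A * Real.sqrt B := by
                rw [div_mul_eq_mul_div, mul_div_assoc, mul_self_div_self]; ring
          have e2 : s * B = Real.sqrt A * Real.sqrt B := by
            calc s * B = Real.sqrt A / Real.sqrt B * (Real.sqrt B * Real.sqrt B) := by rw [hB]
              _ = Real.sqrt A * Real.sqrt B := by
                rw [div_mul_eq_mul_div, mul_div_assoc, mul_self_div_self]
          rw [e1, e2]; ring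

lemma indep_integral_inner {Ω : Type*} [MeasurableSpace Ω] {μ : Measure Ω}
    [IsProbabilityMeasure μ]
    {H : Type*} [NormedAddCommGroup H] [InnerProductSpace ℝ H] [CompleteSpace H]
    [SecondCountableTopology H] [MeasurableSpace H] [BorelSpace H]
    {A B : Ω → H} (hAB : IndepFun A B μ) (hAm : AEMeasurable A μ) (hBm : AEMeasurable B μ)
    (hA : Integrable A μ) (hB : Integrable B μ) :
    ∫ ω, ⟪A ω, B ω⟫ ∂μ = ⟪∫ ω, A ω ∂μ, ∫ ω, B ω ∂μ⟫ := by
  have hcont : Continuous (fun p : H × H => ⟪p.1, p.2⟫) := continuous_inner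
  have hmap : μ.map (fun ω => (A ω, B ω)) = (μ.map A).prod (μ.map B) :=
    (indepFun_iff_map_prod_eq_prod_map_map hAm hBm).mp hAB
  have hPA : IsProbabilityMeasure (μ.map A) := Measure.isProbabilityMeasure_map hAm
  have hPB : IsProbabilityMeasure (μ.map B) := Measure.isProbabilityMeasure_map hBm
  have hidA : Integrable (fun a : H => a) (μ.map A) :=
    (integrable_map_measure stronglyMeasurable_id.aestronglyMeasurable hAm).mpr hA
  have hidB : Integrable (fun a : H => a) (μ.map B) :=
    (integrable_map_measure stronglyMeasurable_id.aestronglyMeasurable hBm).mpr hB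
  have hnA : Integrable (fun a : H => ‖a‖) (μ.map A) := hidA.norm
  have hnB : Integrable (fun a : H => ‖a‖) (μ.map B) := hidB.norm
  have hprod : Integrable (fun p : H × H => ⟪p.1, p.2⟫) ((μ.map A).prod (μ.map B)) := by
    refine Integrable.mono' (hnA.mul_prod hnB) hcont.aestronglyMeasurable ?_
    filter_upwards with p
    exact (abs_real_inner_le_norm p.1 p.2).trans le_rfl
  calc ∫ ω, ⟪A ω, B ω⟫ ∂μ
      = ∫ p : H × H, ⟪p.1, p.2⟫ ∂(μ.map (fun ω => (A ω, B ω))) := by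
        rw [integral_map (hAm.prodMk hBm) hcont.aestronglyMeasurable]
    _ = ∫ p : H × H, ⟪p.1, p.2⟫ ∂((μ.map A).prod (μ.map B)) := by rw [hmap]
    _ = ∫ a, ∫ b, ⟪a, b⟫ ∂(μ.map B) ∂(μ.map A) := integral_prod _ hprod
    _ = ∫ a, ⟪a, ∫ b, b ∂(μ.map B)⟫ ∂(μ.map A) := by
        refine integral_congr_ae (Filter.Eventually.of_forall fun a => ?_)
        exact integral_inner hidB a
    _ = ⟪∫ a, a ∂(μ.map A), ∫ b, b ∂(μ.map B)⟫ := by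
        rw [show (fun a : H => (⟪a, ∫ b, b ∂(μ.map B)⟫ : ℝ))
            = fun a : H => ⟪∫ b, b ∂(μ.map B), a⟫ from funext fun a => real_inner_comm _ _,
          integral_inner hidA, real_inner_comm]
    _ = ⟪∫ ω, A ω ∂μ, ∫ ω, B ω ∂μ⟫ := by
        have e1 : ∫ a, a ∂(μ.map A) = ∫ ω, A ω ∂μ :=
          integral_map hAm stronglyMeasurable_id.aestronglyMeasurable
        have e2 : ∫ b, b ∂(μ.map B) = ∫ ω, B ω ∂μ :=
          integral_map hBm stronglyMeasurable_id.aestronglyMeasurable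
        rw [e1, e2]

end Helpers
noncomputable def crossTerm {Ω : Type*} [MeasureSpace Ω]
    {H : Type*} [NormedAddCommGroup H] [InnerProductSpace ℝ H] [CompleteSpace H]
    {p : ℕ} (X : ℕ → Ω → H) (Z : ℕ → Ω → EuclideanSpace ℝ (Fin p))
    (h : H) (x : ℝ) (n : ℕ) (ω : Ω) : EuclideanSpace ℝ (Fin p) :=
  (n : ℝ)⁻¹ • ∑ i ∈ Finset.range n,
    ⟪X i ω, ((n : ℝ)⁻¹ • ∑ j ∈ Finset.range n, (if ⟪X j ω, h⟫ ≤ x then X j ω else 0))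
        - ∫ ω', (if ⟪X 0 ω', h⟫ ≤ x then X 0 ω' else 0) ∂ℙ⟫ • Z i ω

set_option maxHeartbeats 1000000 in
/-- For i.i.d. pairs `(X_i, Z_i)` with `E‖X₁‖⁴ < ∞` and `E‖Z₁‖² < ∞`,
the expectation `E‖n⁻¹ ∑ ⟨X_i, X̄_{x,h} − E_{x,h}⟩ Z_i‖` is bounded by
`√((2/n²)E‖X₁‖⁴ + ((4n−2)/n²)(E‖X₁‖²)²) · √(E‖Z₁‖²)`; in particular it tends to `0`,
so the random vector converges to `0` in probability. -/
theorem crossTerm_bound_and_convergence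
    {Ω : Type*} [MeasureSpace Ω] [IsProbabilityMeasure (ℙ : Measure Ω)]
    {H : Type*} [NormedAddCommGroup H] [InnerProductSpace ℝ H] [CompleteSpace H]
    [TopologicalSpace.SeparableSpace H] [MeasurableSpace H] [BorelSpace H]
    {p : ℕ}
    (X : ℕ → Ω → H) (Z : ℕ → Ω → EuclideanSpace ℝ (Fin p))
    (hXmeas : ∀ i, Measurable (X i)) (hZmeas : ∀ i, Measurable (Z i))
    -- the pairs (X_i, Z_i) are independent and identically distributed
    (hindep : iIndepFun (fun i ω => (X i ω, Z i ω)) ℙ)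
    (hident : ∀ i, Measure.map (fun ω => (X i ω, Z i ω)) ℙ
        = Measure.map (fun ω => (X 0 ω, Z 0 ω)) ℙ)
    -- E‖X₁‖⁴ < ∞ and E‖Z₁‖² < ∞
    (hX4 : Integrable (fun ω => ‖X 0 ω‖ ^ 4) ℙ)
    (hZ2 : Integrable (fun ω => ‖Z 0 ω‖ ^ 2) ℙ)
    (h : H) (x : ℝ) :
    (∀ n : ℕ, 1 ≤ n →
      (∫ ω, ‖crossTerm X Z h x n ω‖ ∂ℙ)
        ≤ Real.sqrt ((2 / (n : ℝ) ^ 2) * (∫ ω, ‖X 0 ω‖ ^ 4 ∂ℙ)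
              + ((4 * (n : ℝ) - 2) / (n : ℝ) ^ 2) * (∫ ω, ‖X 0 ω‖ ^ 2 ∂ℙ) ^ 2)
          * Real.sqrt (∫ ω, ‖Z 0 ω‖ ^ 2 ∂ℙ)) ∧
    Tendsto (fun n : ℕ => ∫ ω, ‖crossTerm X Z h x n ω‖ ∂ℙ) atTop (nhds 0) ∧
    TendstoInMeasure ℙ (fun n => crossTerm X Z h x n) atTop
      (fun _ => (0 : EuclideanSpace ℝ (Fin p))) := by
  classical
  have hSC : SecondCountableTopology H := UniformSpace.secondCountable_of_separable H
  -- notation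
  set E4 := ∫ ω, ‖X 0 ω‖ ^ 4 ∂ℙ with hE4def
  set E2 := ∫ ω, ‖X 0 ω‖ ^ 2 ∂ℙ with hE2def
  set CZ := ∫ ω, ‖Z 0 ω‖ ^ 2 ∂ℙ with hCZdef
  have hE4nn : 0 ≤ E4 := integral_nonneg fun ω => by positivity
  have hE2nn : 0 ≤ E2 := integral_nonneg fun ω => by positivity
  have hCZnn : 0 ≤ CZ := integral_nonneg fun ω => by positivity
  -- the truncation map and its measurability
  have hφm : Measurable (fun v : H => if ⟪v, h⟫ ≤ x then v else 0) := by
    have hs : MeasurableSet {v : H | ⟪v, h⟫ ≤ x} :=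
      measurableSet_le (Continuous.measurable (by continuity)) measurable_const
    exact Measurable.ite hs measurable_id measurable_const
  set Y : ℕ → Ω → H := fun i ω => if ⟪X i ω, h⟫ ≤ x then X i ω else 0 with hYdef
  have hYm : ∀ i, Measurable (Y i) := fun i => hφm.comp (hXmeas i)
  have hYnorm : ∀ i ω, ‖Y i ω‖ ≤ ‖X i ω‖ := by
    intro i ω
    by_cases hc : ⟪X i ω, h⟫ ≤ x <;> simp [hYdef, hc]
  have hWm : ∀ i, Measurable (fun ω => (X i ω, Z i ω)) := fun i => (hXmeas i).prodMk (hZmeas i)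
  -- marginal laws of X and Z
  have hmapX : ∀ i, (ℙ : Measure Ω).map (X i) = (ℙ : Measure Ω).map (X 0) := by
    intro i
    have h1 : (ℙ : Measure Ω).map (X i)
        = ((ℙ : Measure Ω).map (fun ω => (X i ω, Z i ω))).map Prod.fst := by
      rw [Measure.map_map measurable_fst (hWm i)]; rfl
    have h2 : (ℙ : Measure Ω).map (X 0)
        = ((ℙ : Measure Ω).map (fun ω => (X 0 ω, Z 0 ω))).map Prod.fst := by
      rw [Measure.map_map measurable_fst (hWm 0)]; rfl
    rw [h1, h2, hident i]
  have hmapZ : ∀ i, (ℙ : Measure Ω).map (Z i) = (ℙ : Measure Ω).map (Z 0) := by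
    intro i
    have h1 : (ℙ : Measure Ω).map (Z i)
        = ((ℙ : Measure Ω).map (fun ω => (X i ω, Z i ω))).map Prod.snd := by
      rw [Measure.map_map measurable_snd (hWm i)]; rfl
    have h2 : (ℙ : Measure Ω).map (Z 0)
        = ((ℙ : Measure Ω).map (fun ω => (X 0 ω, Z 0 ω))).map Prod.snd := by
      rw [Measure.map_map measurable_snd (hWm 0)]; rfl
    rw [h1, h2, hident i]
  -- transfer of integrals along identical distribution
  have htX : ∀ (i : ℕ) (f : H → ℝ), Measurable f →
      ∫ ω, f (X i ω) ∂ℙ = ∫ ω, f (X 0 ω) ∂ℙ := by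
    intro i f hf
    rw [← integral_map (hXmeas i).aemeasurable hf.aestronglyMeasurable, hmapX i,
      integral_map (hXmeas 0).aemeasurable hf.aestronglyMeasurable]
  have htXint : ∀ (i : ℕ) (f : H → ℝ), Measurable f →
      Integrable (fun ω => f (X 0 ω)) ℙ → Integrable (fun ω => f (X i ω)) ℙ := by
    intro i f hf h0
    have : Integrable f ((ℙ : Measure Ω).map (X i)) := by
      rw [hmapX i]
      exact (integrable_map_measure hf.aestronglyMeasurable (hXmeas 0).aemeasurable).mpr h0
    exact (integrable_map_measure hf.aestronglyMeasurable (hXmeas i).aemeasurable).mp this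
  have htXH : ∀ (i : ℕ) (f : H → H), Measurable f →
      ∫ ω, f (X i ω) ∂ℙ = ∫ ω, f (X 0 ω) ∂ℙ := by
    intro i f hf
    rw [← integral_map (hXmeas i).aemeasurable hf.aestronglyMeasurable, hmapX i,
      integral_map (hXmeas 0).aemeasurable hf.aestronglyMeasurable]
  have htZ : ∀ (i : ℕ),
      Integrable (fun ω => ‖Z i ω‖ ^ 2) ℙ ∧ ∫ ω, ‖Z i ω‖ ^ 2 ∂ℙ = CZ := by
    intro i
    have hfm : Measurable (fun v : EuclideanSpace ℝ (Fin p) => ‖v‖ ^ 2) :=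
      (measurable_norm.pow_const 2)
    constructor
    · have : Integrable (fun v : EuclideanSpace ℝ (Fin p) => ‖v‖ ^ 2)
          ((ℙ : Measure Ω).map (Z i)) := by
        rw [hmapZ i]
        exact (integrable_map_measure hfm.aestronglyMeasurable
          (hZmeas 0).aemeasurable).mpr hZ2
      exact (integrable_map_measure hfm.aestronglyMeasurable
        (hZmeas i).aemeasurable).mp this
    · rw [← integral_map (hZmeas i).aemeasurable hfm.aestronglyMeasurable, hmapZ i,
        integral_map (hZmeas 0).aemeasurable hfm.aestronglyMeasurable]
  -- integrability facts for X 0 and transfers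
  have habs : ∀ (f g : Ω → ℝ), Integrable g ℙ → AEStronglyMeasurable f ℙ →
      (∀ ω, |f ω| ≤ g ω) → Integrable f ℙ := by
    intro f g hg hf hle
    exact hg.mono' hf (Filter.Eventually.of_forall fun ω => by
      rw [Real.norm_eq_abs]; exact hle ω)
  have hX2 : Integrable (fun ω => ‖X 0 ω‖ ^ 2) ℙ := by
    refine habs _ (fun ω => 1 + ‖X 0 ω‖ ^ 4) ((integrable_const 1).add hX4)
      ((hXmeas 0).norm.pow_const 2).aestronglyMeasurable fun ω => ?_
    show |‖X 0 ω‖ ^ 2| ≤ 1 + ‖X 0 ω‖ ^ 4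
    have := norm_nonneg (X 0 ω)
    rw [abs_of_nonneg (by positivity)]
    nlinarith [sq_nonneg (‖X 0 ω‖ ^ 2 - 1)]
  have hX1 : Integrable (fun ω => ‖X 0 ω‖) ℙ := by
    refine habs _ (fun ω => 1 + ‖X 0 ω‖ ^ 4) ((integrable_const 1).add hX4)
      (hXmeas 0).norm.aestronglyMeasurable fun ω => ?_
    show |‖X 0 ω‖| ≤ 1 + ‖X 0 ω‖ ^ 4
    have := norm_nonneg (X 0 ω)
    rw [abs_of_nonneg (by positivity)]
    nlinarith [sq_nonneg (‖X 0 ω‖ ^ 2 - 1), sq_nonneg (‖X 0 ω‖ - 1), sq_nonneg (‖X 0 ω‖)]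
  have hq0 : Integrable (fun ω => (1 + ‖X 0 ω‖) ^ 4) ℙ := by
    refine habs _ (fun ω => 16 * (1 + ‖X 0 ω‖ ^ 4))
      (((integrable_const 1).add hX4).const_mul 16)
      (((measurable_const.add (hXmeas 0).norm).pow_const 4)).aestronglyMeasurable fun ω => ?_
    show |(1 + ‖X 0 ω‖) ^ 4| ≤ 16 * (1 + ‖X 0 ω‖ ^ 4)
    have := norm_nonneg (X 0 ω)
    rw [abs_of_nonneg (by positivity)]
    nlinarith [sq_nonneg (‖X 0 ω‖ - 1), sq_nonneg (‖X 0 ω‖ ^ 2 - 1),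
      sq_nonneg (‖X 0 ω‖ ^ 2 - ‖X 0 ω‖), sq_nonneg (‖X 0 ω‖ + 1)]
  have hqm : ∀ i, Measurable (fun ω => (1 + ‖X i ω‖) ^ 4) := fun i =>
    (measurable_const.add (hXmeas i).norm).pow_const 4
  have hq : ∀ i, Integrable (fun ω => (1 + ‖X i ω‖) ^ 4) ℙ := fun i =>
    htXint i (fun v => (1 + ‖v‖) ^ 4) ((measurable_const.add measurable_norm).pow_const 4) hq0
  have hqval : ∀ i, ∫ ω, (1 + ‖X i ω‖) ^ 4 ∂ℙ = ∫ ω, (1 + ‖X 0 ω‖) ^ 4 ∂ℙ := fun i =>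
    htX i (fun v => (1 + ‖v‖) ^ 4) ((measurable_const.add measurable_norm).pow_const 4)
  have hX4i : ∀ i, Integrable (fun ω => ‖X i ω‖ ^ 4) ℙ := fun i =>
    htXint i (fun v => ‖v‖ ^ 4) (measurable_norm.pow_const 4) hX4
  have hX4val : ∀ i, ∫ ω, ‖X i ω‖ ^ 4 ∂ℙ = E4 := fun i =>
    htX i (fun v => ‖v‖ ^ 4) (measurable_norm.pow_const 4)
  have hX2i : ∀ i, Integrable (fun ω => ‖X i ω‖ ^ 2) ℙ := fun i =>
    htXint i (fun v => ‖v‖ ^ 2) (measurable_norm.pow_const 2) hX2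
  have hX2val : ∀ i, ∫ ω, ‖X i ω‖ ^ 2 ∂ℙ = E2 := fun i =>
    htX i (fun v => ‖v‖ ^ 2) (measurable_norm.pow_const 2)
  have hX1i : ∀ i, Integrable (fun ω => ‖X i ω‖) ℙ := fun i =>
    htXint i (fun v => ‖v‖) measurable_norm hX1
  -- Y integrability and mean
  have hYint : ∀ i, Integrable (Y i) ℙ := by
    intro i
    refine Integrable.mono' (hX1i i) (hYm i).aestronglyMeasurable ?_
    filter_upwards with ω
    exact hYnorm i ω
  set m : H := ∫ ω', (if ⟪X 0 ω', h⟫ ≤ x then X 0 ω' else 0) ∂ℙ with hmdef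
  have hmY : m = ∫ ω, Y 0 ω ∂ℙ := rfl
  have hEY : ∀ i, ∫ ω, Y i ω ∂ℙ = m := by
    intro i
    have := htXH i (fun v => if ⟪v, h⟫ ≤ x then v else 0) hφm
    simpa [hYdef, hmdef] using this
  set c : ℝ := ‖m‖ with hcdef
  have hc0 : 0 ≤ c := norm_nonneg m
  have hcle : c ≤ ∫ ω, ‖X 0 ω‖ ∂ℙ := by
    calc c ≤ ∫ ω, ‖Y 0 ω‖ ∂ℙ := by
          rw [hcdef, hmY]; exact norm_integral_le_integral_norm _
      _ ≤ ∫ ω, ‖X 0 ω‖ ∂ℙ := integral_mono (hYint 0).norm hX1 fun ω => hYnorm 0 ω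
  have hcsq : c ^ 2 ≤ E2 := by
    have h1 : ∫ ω, ‖X 0 ω‖ ∂ℙ ≤ Real.sqrt E2 := by
      have := integral_cs (μ := (ℙ : Measure Ω)) (f := fun ω => ‖X 0 ω‖) (g := fun _ => 1)
        (fun ω => norm_nonneg _) (fun _ => zero_le_one)
        (hXmeas 0).norm.aestronglyMeasurable aestronglyMeasurable_const
        hX2 (by simpa using integrable_const (1:ℝ))
      simpa [hE2def] using this
    have h2 : c ≤ Real.sqrt E2 := hcle.trans h1
    calc c ^ 2 ≤ Real.sqrt E2 ^ 2 := by
          exact pow_le_pow_left₀ hc0 h2 2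
      _ = E2 := Real.sq_sqrt hE2nn
  -- centered variables
  set Yt : ℕ → Ω → H := fun i ω => Y i ω - m with hYtdef
  have hYtm : ∀ i, Measurable (Yt i) := fun i => (hYm i).sub measurable_const
  have hYtnorm : ∀ i ω, ‖Yt i ω‖ ≤ ‖X i ω‖ + c := by
    intro i ω
    calc ‖Y i ω - m‖ ≤ ‖Y i ω‖ + ‖m‖ := norm_sub_le _ _
      _ ≤ ‖X i ω‖ + c := by rw [hcdef]; exact add_le_add (hYnorm i ω) le_rfl
  have hYtint : ∀ i, Integrable (Yt i) ℙ := fun i => (hYint i).sub (integrable_const m)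
  have hEYt : ∀ i, ∫ ω, Yt i ω ∂ℙ = 0 := by
    intro i
    rw [hYtdef]
    simp only
    rw [integral_sub (hYint i) (integrable_const m), hEY i, integral_const]
    simp
  -- smul-composed integrability
  have hAint : ∀ (a b : ℕ), Integrable (fun ω => ‖X a ω‖ ^ 2 • Yt b ω) ℙ := by
    intro a b
    refine Integrable.mono'
      (((((hq a).add (hq b)).add (integrable_const 1)).const_mul (1 + c)))
      (((hXmeas a).norm.pow_const 2).smul (hYtm b)).aestronglyMeasurable ?_
    filter_upwards with ω
    rw [norm_smul, Real.norm_of_nonneg (by positivity)]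
    calc ‖X a ω‖ ^ 2 * ‖Yt b ω‖ ≤ ‖X a ω‖ ^ 2 * (‖X b ω‖ + c) :=
          mul_le_mul_of_nonneg_left (hYtnorm b ω) (by positivity)
      _ ≤ (1 + c) * ((1 + ‖X a ω‖) ^ 4 + (1 + ‖X b ω‖) ^ 4 + 1) :=
          alg_cubic (norm_nonneg _) (norm_nonneg _) hc0
      _ = (1 + c) * (((1 + ‖X a ω‖) ^ 4 + (1 + ‖X b ω‖) ^ 4) + 1) := by ring
  -- pointwise bound for products entering the variance expansion
  have hTbound : ∀ (i j k : ℕ) (ω : Ω), |‖X i ω‖ ^ 2 * ⟪Yt j ω, Yt k ω⟫|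
      ≤ (1 + c) ^ 2 * ((1 + ‖X i ω‖) ^ 4 + (1 + ‖X j ω‖) ^ 4 + (1 + ‖X k ω‖) ^ 4) := by
    intro i j k ω
    rw [abs_mul, abs_of_nonneg (show (0:ℝ) ≤ ‖X i ω‖ ^ 2 by positivity)]
    calc ‖X i ω‖ ^ 2 * |⟪Yt j ω, Yt k ω⟫|
        ≤ ‖X i ω‖ ^ 2 * (‖Yt j ω‖ * ‖Yt k ω‖) :=
          mul_le_mul_of_nonneg_left (abs_real_inner_le_norm _ _) (by positivity)
      _ ≤ ‖X i ω‖ ^ 2 * ((‖X j ω‖ + c) * (‖X k ω‖ + c)) := by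
          refine mul_le_mul_of_nonneg_left ?_ (by positivity)
          exact mul_le_mul (hYtnorm j ω) (hYtnorm k ω) (norm_nonneg _) (by positivity)
      _ ≤ (1 + c) ^ 2 * ((1 + ‖X i ω‖) ^ 4 + (1 + ‖X j ω‖) ^ 4 + (1 + ‖X k ω‖) ^ 4) :=
          alg_quartic (norm_nonneg _) (norm_nonneg _) (norm_nonneg _) hc0
  have hTm : ∀ (i j k : ℕ), Measurable (fun ω => ‖X i ω‖ ^ 2 * ⟪Yt j ω, Yt k ω⟫) :=
    fun i j k => ((hXmeas i).norm.pow_const 2).mul ((hYtm j).inner (hYtm k))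
  have hTint : ∀ (i j k : ℕ), Integrable (fun ω => ‖X i ω‖ ^ 2 * ⟪Yt j ω, Yt k ω⟫) ℙ := by
    intro i j k
    refine habs _ _ ((((hq i).add (hq j)).add (hq k)).const_mul ((1 + c) ^ 2))
      (hTm i j k).aestronglyMeasurable fun ω => ?_
    show _ ≤ (1 + c) ^ 2 * ((1 + ‖X i ω‖) ^ 4 + (1 + ‖X j ω‖) ^ 4 + (1 + ‖X k ω‖) ^ 4)
    exact hTbound i j k ω
  -- off-diagonal terms vanish by independence
  have hzero : ∀ (i j k : ℕ), j ≠ k → ∫ ω, ‖X i ω‖ ^ 2 * ⟪Yt j ω, Yt k ω⟫ ∂ℙ = 0 := by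
    intro i j k hjk
    by_cases hk : k = i
    · subst hk
      have hind : IndepFun (Yt j) (fun ω => ‖X k ω‖ ^ 2 • Yt k ω) (ℙ : Measure Ω) := by
        have h0 : IndepFun (fun ω => (X j ω, Z j ω)) (fun ω => (X k ω, Z k ω)) ℙ :=
          hindep.indepFun hjk
        exact h0.comp
          (show Measurable (fun q : H × EuclideanSpace ℝ (Fin p) =>
            (if ⟪q.1, h⟫ ≤ x then q.1 else 0) - m) from
            (hφm.comp measurable_fst).sub measurable_const)
          (show Measurable (fun q : H × EuclideanSpace ℝ (Fin p) =>
            ‖q.1‖ ^ 2 • ((if ⟪q.1, h⟫ ≤ x then q.1 else 0) - m)) from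
            ((measurable_fst.norm.pow_const 2)).smul
              ((hφm.comp measurable_fst).sub measurable_const))
      have heq : ∀ ω, ‖X k ω‖ ^ 2 * ⟪Yt j ω, Yt k ω⟫ = ⟪Yt j ω, ‖X k ω‖ ^ 2 • Yt k ω⟫ := by
        intro ω; rw [real_inner_smul_right]
      rw [integral_congr_ae (Filter.Eventually.of_forall heq),
        indep_integral_inner hind (hYtm j).aemeasurable
          (((hXmeas k).norm.pow_const 2).smul (hYtm k)).aemeasurable (hYtint j) (hAint k k),
        hEYt j]
      simp
    · have hind0 : IndepFun (fun ω => ((X i ω, Z i ω), (X j ω, Z j ω)))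
          (fun ω => (X k ω, Z k ω)) ℙ :=
        hindep.indepFun_prodMk hWm i j k (fun hh => hk hh.symm) hjk
      have hind : IndepFun (fun ω => ‖X i ω‖ ^ 2 • Yt j ω) (Yt k) ℙ := by
        exact hind0.comp
          (show Measurable
            (fun q : (H × EuclideanSpace ℝ (Fin p)) × (H × EuclideanSpace ℝ (Fin p)) =>
              ‖q.1.1‖ ^ 2 • ((if ⟪q.2.1, h⟫ ≤ x then q.2.1 else 0) - m)) from
            ((measurable_fst.fst.norm.pow_const 2)).smul
              ((hφm.comp measurable_snd.fst).sub measurable_const))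
          ((hφm.comp measurable_fst).sub measurable_const)
      have heq : ∀ ω, ‖X i ω‖ ^ 2 * ⟪Yt j ω, Yt k ω⟫ = ⟪‖X i ω‖ ^ 2 • Yt j ω, Yt k ω⟫ := by
        intro ω; rw [real_inner_smul_left]
      rw [integral_congr_ae (Filter.Eventually.of_forall heq),
        indep_integral_inner hind (((hXmeas i).norm.pow_const 2).smul (hYtm j)).aemeasurable
          (hYtm k).aemeasurable (hAint i j) (hYtint k), hEYt k]
      simp
  -- second moments of the centered variables
  have hYt2int : ∀ j, Integrable (fun ω => ‖Yt j ω‖ ^ 2) ℙ := by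
    intro j
    refine habs _ (fun ω => 2 * ‖X j ω‖ ^ 2 + 2 * c ^ 2)
      (((hX2i j).const_mul 2).add (integrable_const (2 * c ^ 2)))
      ((hYtm j).norm.pow_const 2).aestronglyMeasurable fun ω => ?_
    show |‖Yt j ω‖ ^ 2| ≤ 2 * ‖X j ω‖ ^ 2 + 2 * c ^ 2
    rw [abs_of_nonneg (by positivity)]
    nlinarith [mul_self_le_mul_self (norm_nonneg (Yt j ω)) (hYtnorm j ω),
      sq_nonneg (‖X j ω‖ - c)]
  have hYt2val : ∀ j, ∫ ω, ‖Yt j ω‖ ^ 2 ∂ℙ ≤ 4 * E2 := by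
    intro j
    calc ∫ ω, ‖Yt j ω‖ ^ 2 ∂ℙ ≤ ∫ ω, (2 * ‖X j ω‖ ^ 2 + 2 * c ^ 2) ∂ℙ := by
          refine integral_mono (hYt2int j)
            (((hX2i j).const_mul 2).add (integrable_const _)) fun ω => ?_
          nlinarith [mul_self_le_mul_self (norm_nonneg (Yt j ω)) (hYtnorm j ω),
            sq_nonneg (‖X j ω‖ - c)]
      _ = 2 * E2 + 2 * c ^ 2 := by
          rw [integral_add ((hX2i j).const_mul 2) (integrable_const _), integral_const_mul,
            hX2val j, integral_const]
          simp
      _ ≤ 4 * E2 := by nlinarith [hcsq, hE2nn]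
  -- diagonal bounds
  have hdiag_ii : ∀ i, ∫ ω, ‖X i ω‖ ^ 2 * ⟪Yt i ω, Yt i ω⟫ ∂ℙ ≤ 2 * E4 + 2 * E2 ^ 2 := by
    intro i
    have hpt : ∀ ω, ‖X i ω‖ ^ 2 * ⟪Yt i ω, Yt i ω⟫
        ≤ 2 * ‖X i ω‖ ^ 4 + (2 * c ^ 2) * ‖X i ω‖ ^ 2 := by
      intro ω
      have h1 : ‖Yt i ω‖ ^ 2 ≤ 2 * ‖X i ω‖ ^ 2 + 2 * c ^ 2 := by
        nlinarith [mul_self_le_mul_self (norm_nonneg (Yt i ω)) (hYtnorm i ω),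
          sq_nonneg (‖X i ω‖ - c)]
      calc ‖X i ω‖ ^ 2 * ⟪Yt i ω, Yt i ω⟫ = ‖X i ω‖ ^ 2 * ‖Yt i ω‖ ^ 2 := by
            rw [real_inner_self_eq_norm_sq]
        _ ≤ ‖X i ω‖ ^ 2 * (2 * ‖X i ω‖ ^ 2 + 2 * c ^ 2) :=
            mul_le_mul_of_nonneg_left h1 (by positivity)
        _ = 2 * ‖X i ω‖ ^ 4 + (2 * c ^ 2) * ‖X i ω‖ ^ 2 := by ring
    calc ∫ ω, ‖X i ω‖ ^ 2 * ⟪Yt i ω, Yt i ω⟫ ∂ℙ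
        ≤ ∫ ω, (2 * ‖X i ω‖ ^ 4 + (2 * c ^ 2) * ‖X i ω‖ ^ 2) ∂ℙ :=
          integral_mono (hTint i i i)
            (((hX4i i).const_mul 2).add ((hX2i i).const_mul (2 * c ^ 2))) hpt
      _ = 2 * E4 + (2 * c ^ 2) * E2 := by
          rw [integral_add ((hX4i i).const_mul 2) ((hX2i i).const_mul (2 * c ^ 2)),
            integral_const_mul, integral_const_mul, hX4val i, hX2val i]
      _ ≤ 2 * E4 + 2 * E2 ^ 2 := by nlinarith [hcsq, hE2nn]
  have hdiag_ne : ∀ i j, i ≠ j → ∫ ω, ‖X i ω‖ ^ 2 * ⟪Yt j ω, Yt j ω⟫ ∂ℙ ≤ 4 * E2 ^ 2 := by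
    intro i j hij
    have heq : ∀ ω, ‖X i ω‖ ^ 2 * ⟪Yt j ω, Yt j ω⟫ = ‖X i ω‖ ^ 2 * ‖Yt j ω‖ ^ 2 := fun ω => by
      rw [real_inner_self_eq_norm_sq]
    have hind : IndepFun (fun ω => ‖X i ω‖ ^ 2) (fun ω => ‖Yt j ω‖ ^ 2) (ℙ : Measure Ω) :=
      (hindep.indepFun hij).comp
        (show Measurable (fun q : H × EuclideanSpace ℝ (Fin p) => ‖q.1‖ ^ 2) from
          measurable_fst.norm.pow_const 2)
        (show Measurable (fun q : H × EuclideanSpace ℝ (Fin p) =>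
            ‖(if ⟪q.1, h⟫ ≤ x then q.1 else 0) - m‖ ^ 2) from
          (((hφm.comp measurable_fst).sub measurable_const).norm.pow_const 2))
    have hmul : ∫ ω, ‖X i ω‖ ^ 2 * ‖Yt j ω‖ ^ 2 ∂ℙ
        = (∫ ω, ‖X i ω‖ ^ 2 ∂ℙ) * ∫ ω, ‖Yt j ω‖ ^ 2 ∂ℙ :=
      hind.integral_fun_mul_eq_mul_integral (hX2i i).aestronglyMeasurable (hYt2int j).aestronglyMeasurable
    rw [integral_congr_ae (Filter.Eventually.of_forall heq), hmul, hX2val i]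
    calc E2 * ∫ ω, ‖Yt j ω‖ ^ 2 ∂ℙ ≤ E2 * (4 * E2) :=
          mul_le_mul_of_nonneg_left (hYt2val j) hE2nn
      _ = 4 * E2 ^ 2 := by ring
  -- the master bound for each n ≥ 1
  have master : ∀ n : ℕ, 1 ≤ n → Integrable (crossTerm X Z h x n) ℙ ∧
      (∫ ω, ‖crossTerm X Z h x n ω‖ ∂ℙ)
        ≤ Real.sqrt ((2 / (n : ℝ) ^ 2) * E4 + ((4 * (n : ℝ) - 2) / (n : ℝ) ^ 2) * E2 ^ 2)
          * Real.sqrt CZ := by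
    intro n hn
    have hn0 : ((n : ℕ) : ℝ) ≠ 0 := Nat.cast_ne_zero.mpr (by omega)
    set D : Ω → H := fun ω => ((n : ℝ)⁻¹ • ∑ j ∈ Finset.range n, Y j ω) - m with hDdef
    have hDm : Measurable D :=
      ((Finset.measurable_sum _ fun j _ => hYm j).const_smul ((n : ℝ)⁻¹)).sub measurable_const
    have hDsum : ∀ ω, D ω = (n : ℝ)⁻¹ • ∑ j ∈ Finset.range n, Yt j ω := by
      intro ω
      rw [hDdef]
      simp only [hYtdef]
      rw [Finset.sum_sub_distrib, smul_sub, Finset.sum_const, Finset.card_range,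
        ← Nat.cast_smul_eq_nsmul ℝ, smul_smul, inv_mul_cancel₀ hn0, one_smul]
    have hD2 : ∀ ω, ‖D ω‖ ^ 2
        = ((n : ℝ) ^ 2)⁻¹ * ∑ j ∈ Finset.range n, ∑ k ∈ Finset.range n, ⟪Yt j ω, Yt k ω⟫ := by
      intro ω
      rw [hDsum ω, ← real_inner_self_eq_norm_sq, real_inner_smul_left, real_inner_smul_right,
        sum_inner]
      simp_rw [inner_sum]
      rw [← mul_assoc, ← mul_inv, ← sq]
    have hXD2pt : ∀ (i : ℕ) (ω : Ω), ‖X i ω‖ ^ 2 * ‖D ω‖ ^ 2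
        = ((n : ℝ) ^ 2)⁻¹ * ∑ j ∈ Finset.range n, ∑ k ∈ Finset.range n,
            ‖X i ω‖ ^ 2 * ⟪Yt j ω, Yt k ω⟫ := by
      intro i ω
      rw [hD2 ω, ← mul_assoc, mul_comm (‖X i ω‖ ^ 2) (((n : ℝ) ^ 2)⁻¹), mul_assoc]
      congr 1
      rw [Finset.mul_sum]
      refine Finset.sum_congr rfl fun j _ => ?_
      rw [Finset.mul_sum]
    have hXD2int : ∀ i, Integrable (fun ω => ‖X i ω‖ ^ 2 * ‖D ω‖ ^ 2) ℙ := by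
      intro i
      have hi : Integrable (fun ω => ((n : ℝ) ^ 2)⁻¹ * ∑ j ∈ Finset.range n,
          ∑ k ∈ Finset.range n, ‖X i ω‖ ^ 2 * ⟪Yt j ω, Yt k ω⟫) ℙ :=
        (integrable_finset_sum _ fun j _ =>
          integrable_finset_sum _ fun k _ => hTint i j k).const_mul _
      exact hi.congr (Filter.Eventually.of_forall fun ω => (hXD2pt i ω).symm)
    have hXD2val : ∀ i ∈ Finset.range n, ∫ ω, ‖X i ω‖ ^ 2 * ‖D ω‖ ^ 2 ∂ℙ
        ≤ (2 / (n : ℝ) ^ 2) * E4 + ((4 * (n : ℝ) - 2) / (n : ℝ) ^ 2) * E2 ^ 2 := by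
      intro i hi
      have hcollapse : ∀ j ∈ Finset.range n, (∑ k ∈ Finset.range n,
          ∫ ω, ‖X i ω‖ ^ 2 * ⟪Yt j ω, Yt k ω⟫ ∂ℙ) = ∫ ω, ‖X i ω‖ ^ 2 * ⟪Yt j ω, Yt j ω⟫ ∂ℙ := by
        intro j hj
        exact Finset.sum_eq_single_of_mem j hj fun k _ hkj => hzero i j k (Ne.symm hkj)
      have hcard : ((Finset.range n).erase i).card = n - 1 := by
        rw [Finset.card_erase_of_mem hi, Finset.card_range]
      have h1 : ∑ j ∈ (Finset.range n).erase i, ∫ ω, ‖X i ω‖ ^ 2 * ⟪Yt j ω, Yt j ω⟫ ∂ℙ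
          ≤ ((n : ℝ) - 1) * (4 * E2 ^ 2) := by
        have := Finset.sum_le_card_nsmul ((Finset.range n).erase i)
          (fun j => ∫ ω, ‖X i ω‖ ^ 2 * ⟪Yt j ω, Yt j ω⟫ ∂ℙ) (4 * E2 ^ 2)
          (fun j hj => hdiag_ne i j (fun hh => (Finset.mem_erase.mp hj).1 hh.symm))
        rw [hcard, nsmul_eq_mul, Nat.cast_sub hn, Nat.cast_one] at this
        exact this
      have hsum_le : ∑ j ∈ Finset.range n, ∫ ω, ‖X i ω‖ ^ 2 * ⟪Yt j ω, Yt j ω⟫ ∂ℙ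
          ≤ 2 * E4 + (4 * (n : ℝ) - 2) * E2 ^ 2 := by
        rw [← Finset.add_sum_erase _ _ hi]
        calc (∫ ω, ‖X i ω‖ ^ 2 * ⟪Yt i ω, Yt i ω⟫ ∂ℙ)
              + ∑ j ∈ (Finset.range n).erase i, ∫ ω, ‖X i ω‖ ^ 2 * ⟪Yt j ω, Yt j ω⟫ ∂ℙ
            ≤ (2 * E4 + 2 * E2 ^ 2) + ((n : ℝ) - 1) * (4 * E2 ^ 2) :=
              add_le_add (hdiag_ii i) h1
          _ = 2 * E4 + (4 * (n : ℝ) - 2) * E2 ^ 2 := by ring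
      calc ∫ ω, ‖X i ω‖ ^ 2 * ‖D ω‖ ^ 2 ∂ℙ
          = ∫ ω, ((n : ℝ) ^ 2)⁻¹ * ∑ j ∈ Finset.range n, ∑ k ∈ Finset.range n,
              ‖X i ω‖ ^ 2 * ⟪Yt j ω, Yt k ω⟫ ∂ℙ :=
            integral_congr_ae (Filter.Eventually.of_forall (hXD2pt i))
        _ = ((n : ℝ) ^ 2)⁻¹ * ∫ ω, ∑ j ∈ Finset.range n, ∑ k ∈ Finset.range n,
              ‖X i ω‖ ^ 2 * ⟪Yt j ω, Yt k ω⟫ ∂ℙ := integral_const_mul _ _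
        _ = ((n : ℝ) ^ 2)⁻¹ * ∑ j ∈ Finset.range n, ∑ k ∈ Finset.range n,
              ∫ ω, ‖X i ω‖ ^ 2 * ⟪Yt j ω, Yt k ω⟫ ∂ℙ := by
            rw [integral_finset_sum _ fun j _ =>
              integrable_finset_sum _ fun k _ => hTint i j k]
            congr 1
            exact Finset.sum_congr rfl fun j _ =>
              integral_finset_sum _ fun k _ => hTint i j k
        _ = ((n : ℝ) ^ 2)⁻¹ * ∑ j ∈ Finset.range n,
              ∫ ω, ‖X i ω‖ ^ 2 * ⟪Yt j ω, Yt j ω⟫ ∂ℙ := by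
            rw [Finset.sum_congr rfl hcollapse]
        _ ≤ ((n : ℝ) ^ 2)⁻¹ * (2 * E4 + (4 * (n : ℝ) - 2) * E2 ^ 2) :=
            mul_le_mul_of_nonneg_left hsum_le (by positivity)
        _ = (2 / (n : ℝ) ^ 2) * E4 + ((4 * (n : ℝ) - 2) / (n : ℝ) ^ 2) * E2 ^ 2 := by ring
    set Bn := (2 / (n : ℝ) ^ 2) * E4 + ((4 * (n : ℝ) - 2) / (n : ℝ) ^ 2) * E2 ^ 2 with hBndef
    have hfm : ∀ i, Measurable (fun ω => ⟪X i ω, D ω⟫) := fun i => (hXmeas i).inner hDm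
    have hfpt : ∀ (i : ℕ) (ω : Ω), ⟪X i ω, D ω⟫ ^ 2 ≤ ‖X i ω‖ ^ 2 * ‖D ω‖ ^ 2 := by
      intro i ω
      calc ⟪X i ω, D ω⟫ ^ 2 = |⟪X i ω, D ω⟫| ^ 2 := (sq_abs _).symm
        _ ≤ (‖X i ω‖ * ‖D ω‖) ^ 2 :=
            pow_le_pow_left₀ (abs_nonneg _) (abs_real_inner_le_norm _ _) 2
        _ = ‖X i ω‖ ^ 2 * ‖D ω‖ ^ 2 := mul_pow _ _ 2
    have hf2int : ∀ i, Integrable (fun ω => ⟪X i ω, D ω⟫ ^ 2) ℙ := by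
      intro i
      refine habs _ _ (hXD2int i) ((hfm i).pow_const 2).aestronglyMeasurable fun ω => ?_
      rw [abs_of_nonneg (sq_nonneg _)]
      exact hfpt i ω
    have hf2le : ∀ i ∈ Finset.range n, ∫ ω, ⟪X i ω, D ω⟫ ^ 2 ∂ℙ ≤ Bn := by
      intro i hi
      exact le_trans (integral_mono (hf2int i) (hXD2int i) (hfpt i)) (hXD2val i hi)
    have hCS : ∀ i ∈ Finset.range n,
        ∫ ω, |⟪X i ω, D ω⟫| * ‖Z i ω‖ ∂ℙ ≤ Real.sqrt Bn * Real.sqrt CZ := by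
      intro i hi
      have h1 := integral_cs (μ := (ℙ : Measure Ω)) (f := fun ω => |⟪X i ω, D ω⟫|)
        (g := fun ω => ‖Z i ω‖) (fun ω => abs_nonneg _) (fun ω => norm_nonneg _)
        ((hfm i).abs.aestronglyMeasurable) ((hZmeas i).norm.aestronglyMeasurable)
        (by simpa [sq_abs] using hf2int i) (htZ i).1
      have h2 : ∫ ω, |⟪X i ω, D ω⟫| ^ 2 ∂ℙ = ∫ ω, ⟪X i ω, D ω⟫ ^ 2 ∂ℙ := by
        simp [sq_abs]
      rw [h2, (htZ i).2] at h1
      exact h1.trans (mul_le_mul_of_nonneg_right (Real.sqrt_le_sqrt (hf2le i hi))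
        (Real.sqrt_nonneg _))
    have hprod_int : ∀ i, Integrable (fun ω => |⟪X i ω, D ω⟫| * ‖Z i ω‖) ℙ := by
      intro i
      refine habs _ _ (((hf2int i).add (htZ i).1).div_const 2)
        (((hfm i).abs.mul (hZmeas i).norm).aestronglyMeasurable) fun ω => ?_
      show |(|⟪X i ω, D ω⟫| * ‖Z i ω‖)| ≤ (⟪X i ω, D ω⟫ ^ 2 + ‖Z i ω‖ ^ 2) / 2
      rw [abs_of_nonneg (by positivity)]
      nlinarith [sq_nonneg (|⟪X i ω, D ω⟫| - ‖Z i ω‖), sq_abs ⟪X i ω, D ω⟫,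
        abs_nonneg ⟪X i ω, D ω⟫, norm_nonneg (Z i ω)]
    have hceq : ∀ ω, crossTerm X Z h x n ω
        = (n : ℝ)⁻¹ • ∑ i ∈ Finset.range n, ⟪X i ω, D ω⟫ • Z i ω := fun ω => rfl
    have hcm : Measurable (crossTerm X Z h x n) := by
      rw [show crossTerm X Z h x n
          = fun ω => (n : ℝ)⁻¹ • ∑ i ∈ Finset.range n, ⟪X i ω, D ω⟫ • Z i ω from funext hceq]
      exact (Finset.measurable_fun_sum _ fun i _ => ((hfm i).smul (hZmeas i))).const_smul ((n : ℝ)⁻¹)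
    have hnle : ∀ ω, ‖crossTerm X Z h x n ω‖
        ≤ (n : ℝ)⁻¹ * ∑ i ∈ Finset.range n, |⟪X i ω, D ω⟫| * ‖Z i ω‖ := by
      intro ω
      rw [hceq ω, norm_smul, Real.norm_of_nonneg (by positivity)]
      refine mul_le_mul_of_nonneg_left ?_ (by positivity)
      refine (norm_sum_le _ _).trans ?_
      refine Finset.sum_le_sum fun i _ => ?_
      rw [norm_smul, Real.norm_eq_abs]
    have hRint : Integrable
        (fun ω => (n : ℝ)⁻¹ * ∑ i ∈ Finset.range n, |⟪X i ω, D ω⟫| * ‖Z i ω‖) ℙ :=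
      (integrable_finset_sum _ fun i _ => hprod_int i).const_mul _
    have hIcross : Integrable (crossTerm X Z h x n) ℙ := by
      refine Integrable.mono' hRint hcm.aestronglyMeasurable ?_
      filter_upwards with ω
      exact hnle ω
    refine ⟨hIcross, ?_⟩
    calc ∫ ω, ‖crossTerm X Z h x n ω‖ ∂ℙ
        ≤ ∫ ω, (n : ℝ)⁻¹ * ∑ i ∈ Finset.range n, |⟪X i ω, D ω⟫| * ‖Z i ω‖ ∂ℙ :=
          integral_mono_of_nonneg (Filter.Eventually.of_forall fun ω => norm_nonneg _) hRint
            (Filter.Eventually.of_forall hnle)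
      _ = (n : ℝ)⁻¹ * ∑ i ∈ Finset.range n, ∫ ω, |⟪X i ω, D ω⟫| * ‖Z i ω‖ ∂ℙ := by
          rw [integral_const_mul, integral_finset_sum _ fun i _ => hprod_int i]
      _ ≤ (n : ℝ)⁻¹ * ∑ _i ∈ Finset.range n, (Real.sqrt Bn * Real.sqrt CZ) :=
          mul_le_mul_of_nonneg_left (Finset.sum_le_sum hCS) (by positivity)
      _ = Real.sqrt Bn * Real.sqrt CZ := by
          rw [Finset.sum_const, Finset.card_range, nsmul_eq_mul, ← mul_assoc,
            inv_mul_cancel₀ hn0, one_mul]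
  -- part 2: convergence of the expectations
  have hT0 : Tendsto (fun n : ℕ => ∫ ω, ‖crossTerm X Z h x n ω‖ ∂ℙ) atTop (nhds 0) := by
    have h1 : Tendsto (fun n : ℕ => (2 / (n : ℝ) ^ 2) * E4
        + ((4 * (n : ℝ) - 2) / (n : ℝ) ^ 2) * E2 ^ 2) atTop (nhds 0) := by
      have t1 : Tendsto (fun n : ℕ => (2 * E4 - 2 * E2 ^ 2) / (n : ℝ) ^ 2) atTop (nhds 0) := by
        have t0 := (tendsto_const_div_atTop_nhds_zero_nat (2 * E4 - 2 * E2 ^ 2)).mul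
          (tendsto_const_div_atTop_nhds_zero_nat 1)
        simp only [mul_zero] at t0
        refine t0.congr fun n => ?_
        rw [div_mul_div_comm, mul_one]; ring
      have t2 : Tendsto (fun n : ℕ => (4 * E2 ^ 2) / (n : ℝ)) atTop (nhds 0) :=
        tendsto_const_div_atTop_nhds_zero_nat _
      have t3 := t1.add t2
      simp only [add_zero] at t3
      refine (Filter.Tendsto.congr' ?_ t3)
      filter_upwards [eventually_ge_atTop 1] with n hn
      have hn0 : ((n : ℕ) : ℝ) ≠ 0 := Nat.cast_ne_zero.mpr (by omega)
      field_simp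
      ring
    have h2 : Tendsto (fun n : ℕ => Real.sqrt ((2 / (n : ℝ) ^ 2) * E4
        + ((4 * (n : ℝ) - 2) / (n : ℝ) ^ 2) * E2 ^ 2)) atTop (nhds 0) := by
      have := (Real.continuous_sqrt.tendsto 0).comp h1
      simpa [Function.comp_def] using this
    have hb := h2.mul_const (Real.sqrt CZ)
    simp only [zero_mul] at hb
    refine squeeze_zero' ?_ ?_ hb
    · filter_upwards with n
      exact integral_nonneg fun ω => norm_nonneg _
    · filter_upwards [eventually_ge_atTop 1] with n hn
      exact (master n hn).2
  have hIall : ∀ n, Integrable (crossTerm X Z h x n) ℙ := by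
    intro n
    rcases Nat.eq_zero_or_pos n with h0 | h1
    · subst h0
      have hzero' : crossTerm X Z h x 0 = fun _ => (0 : EuclideanSpace ℝ (Fin p)) := by
        funext ω; simp [crossTerm]
      rw [hzero']
      exact integrable_const 0
    · exact (master n h1).1
  refine ⟨fun n hn => (master n hn).2, hT0, ?_⟩
  refine tendstoInMeasure_of_tendsto_eLpNorm (p := 1) one_ne_zero
    (fun n => (hIall n).aestronglyMeasurable) aestronglyMeasurable_const ?_
  have heq : ∀ n : ℕ,
      eLpNorm (crossTerm X Z h x n - fun _ => (0 : EuclideanSpace ℝ (Fin p))) 1 ℙ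
      = ENNReal.ofReal (∫ ω, ‖crossTerm X Z h x n ω‖ ∂ℙ) := by
    intro n
    have hsz : (crossTerm X Z h x n - fun _ => (0 : EuclideanSpace ℝ (Fin p)))
        = crossTerm X Z h x n := by
      funext ω; simp
    rw [hsz, eLpNorm_one_eq_lintegral_enorm,
      ← ofReal_integral_norm_eq_lintegral_enorm (hIall n)]
  rw [show (fun n : ℕ =>
      eLpNorm (crossTerm X Z h x n - fun _ => (0 : EuclideanSpace ℝ (Fin p))) 1 ℙ)
      = fun n : ℕ => ENNReal.ofReal (∫ ω, ‖crossTerm X Z h x n ω‖ ∂ℙ) from funext heq]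
  have := ENNReal.tendsto_ofReal hT0
  simpa using this
end

section
/- Let W be a real random variable and X an H-valued random variable with E‖X‖² < ∞, and let D be any H-valued random variable on the same probability space with E‖D‖⁴ < ∞ (no independence between D and (W,X) is assumed). For u ∈ ℝ define g(u) := E[1{W ≤ u} X] ∈ H (a Bochner integral), F(u) := E[1{W ≤ u} ‖X‖²] ∈ ℝ, and the random variable T(u) := ⟨g(u), D⟩. Then for all real numbers u₁ ≤ u ≤ u₂: E[ (T(u) − T(u₁))² (T(u₂) − T(u))² ] ≤ E[‖D‖⁴] · (F(u) − F(u₁)) · (F(u₂) − F(u)) ≤ E[‖D‖⁴] · (F(u₂) − F(u₁))². -/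
open MeasureTheory ProbabilityTheory Filter
open scoped RealInnerProductSpace

/-- Cauchy–Schwarz on a probability space: `(∫ f)² ≤ ∫ f²` for nonnegative `f`. -/
lemma sq_integral_le_integral_sq' {Ω : Type*} [MeasureSpace Ω]
    [IsProbabilityMeasure (ℙ : Measure Ω)] {f : Ω → ℝ}
    (hmeas : AEStronglyMeasurable f ℙ) (hnn : ∀ ω, 0 ≤ f ω)
    (h2 : Integrable (fun ω => f ω ^ 2) ℙ) :
    (∫ ω, f ω ∂ℙ) ^ 2 ≤ ∫ ω, f ω ^ 2 ∂ℙ := by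
  have hpq : Real.HolderConjugate 2 2 := Real.HolderConjugate.two_two
  have hf2 : MemLp f 2 ℙ := (memLp_two_iff_integrable_sq hmeas).2 h2
  have hone : MemLp (fun _ : Ω => (1 : ℝ)) 2 ℙ := memLp_const 1
  have := integral_mul_le_Lp_mul_Lq_of_nonneg (μ := (ℙ : Measure Ω)) hpq
    (f := f) (g := fun _ => (1 : ℝ)) (ae_of_all _ hnn)
    (ae_of_all _ fun _ => zero_le_one)
    (by simpa using hf2) (by simpa using hone)
  have hrw : ∀ x : ℝ, x ^ (2:ℝ) = x ^ (2:ℕ) := fun x => by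
    rw [← Real.rpow_natCast x 2]; norm_num
  simp only [hrw, Real.one_rpow, one_pow, mul_one] at this
  have h1 : ∫ (_ : Ω), (1 : ℝ) ∂ℙ = 1 := by simp
  rw [h1] at this
  simp only [Real.one_rpow, mul_one] at this
  have hI2 : 0 ≤ ∫ ω, f ω ^ 2 ∂ℙ := integral_nonneg fun ω => sq_nonneg _
  have hIf : 0 ≤ ∫ ω, f ω ∂ℙ := integral_nonneg hnn
  calc (∫ ω, f ω ∂ℙ) ^ 2 ≤ ((∫ ω, f ω ^ 2 ∂ℙ) ^ ((1:ℝ)/2)) ^ 2 :=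
        pow_le_pow_left₀ hIf this 2
    _ = ∫ ω, f ω ^ 2 ∂ℙ := by
        rw [← Real.rpow_natCast ((∫ ω, f ω ^ 2 ∂ℙ) ^ ((1:ℝ)/2)) 2,
          ← Real.rpow_mul hI2]
        norm_num

/-- With `g(u) = E[1{W≤u} X]`, `F(u) = E[1{W≤u}‖X‖²]` and
`T(u) = ⟨g(u), D⟩`, for `u₁ ≤ u ≤ u₂`,
`E[(T(u)−T(u₁))²(T(u₂)−T(u))²] ≤ E‖D‖⁴ (F(u)−F(u₁))(F(u₂)−F(u)) ≤ E‖D‖⁴ (F(u₂)−F(u₁))²`. -/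
theorem increment_fourth_moment_bound
    {Ω : Type*} [MeasureSpace Ω] [IsProbabilityMeasure (ℙ : Measure Ω)]
    {H : Type*} [NormedAddCommGroup H] [InnerProductSpace ℝ H] [CompleteSpace H]
    [TopologicalSpace.SeparableSpace H] [MeasurableSpace H] [BorelSpace H]
    (W : Ω → ℝ) (hW : Measurable W)
    (X : Ω → H) (hX : Measurable X)
    (hX2 : Integrable (fun ω => ‖X ω‖ ^ 2) ℙ)
    (D : Ω → H) (hD : Measurable D)
    (hD4 : Integrable (fun ω => ‖D ω‖ ^ 4) ℙ)
    -- g(u) = E[1{W ≤ u} X],  F(u) = E[1{W ≤ u} ‖X‖²],  T(u)(ω) = ⟨g(u), D(ω)⟩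
    (g : ℝ → H) (hg : ∀ u, g u = ∫ ω, (if W ω ≤ u then X ω else 0) ∂ℙ)
    (F : ℝ → ℝ) (hF : ∀ u, F u = ∫ ω, (if W ω ≤ u then ‖X ω‖ ^ 2 else 0) ∂ℙ)
    (T : ℝ → Ω → ℝ) (hT : ∀ u ω, T u ω = ⟪g u, D ω⟫)
    (u₁ u u₂ : ℝ) (h₁ : u₁ ≤ u) (h₂ : u ≤ u₂) :
    (∫ ω, (T u ω - T u₁ ω) ^ 2 * (T u₂ ω - T u ω) ^ 2 ∂ℙ)
      ≤ (∫ ω, ‖D ω‖ ^ 4 ∂ℙ) * (F u - F u₁) * (F u₂ - F u) ∧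
    (∫ ω, ‖D ω‖ ^ 4 ∂ℙ) * (F u - F u₁) * (F u₂ - F u)
      ≤ (∫ ω, ‖D ω‖ ^ 4 ∂ℙ) * (F u₂ - F u₁) ^ 2 := by
  -- measurability of the cut sets
  have hset : ∀ v : ℝ, MeasurableSet {ω | W ω ≤ v} := fun v =>
    measurableSet_le hW measurable_const
  -- integrability of the truncated ‖X‖² terms
  have hif2 : ∀ v : ℝ, Integrable (fun ω => if W ω ≤ v then ‖X ω‖ ^ 2 else 0) ℙ := by
    intro v
    refine hX2.mono' ?_ (ae_of_all _ fun ω => ?_)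
    · exact (Measurable.ite (hset v) (hX.norm.pow_const 2) measurable_const).aestronglyMeasurable
    · by_cases h : W ω ≤ v <;> simp [h, abs_of_nonneg (sq_nonneg (‖X ω‖)), sq_nonneg]
  -- integrability of the truncated X terms
  have hifX : ∀ v : ℝ, Integrable (fun ω => if W ω ≤ v then X ω else 0) ℙ := by
    intro v
    refine ((integrable_const (1 : ℝ)).add hX2).mono' ?_ (ae_of_all _ fun ω => ?_)
    · exact (Measurable.ite (hset v) hX measurable_const).aestronglyMeasurable
    · have : ‖X ω‖ ≤ 1 + ‖X ω‖ ^ 2 := by nlinarith [sq_nonneg (‖X ω‖ - 1)]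
      by_cases h : W ω ≤ v <;> simp [h] <;> linarith [norm_nonneg (X ω)]
  -- monotonicity of F
  have hFmono : ∀ a b : ℝ, a ≤ b → F a ≤ F b := by
    intro a b hab
    rw [hF, hF]
    refine integral_mono (hif2 a) (hif2 b) fun ω => ?_
    by_cases h : W ω ≤ a
    · simp [h, h.trans hab]
    · by_cases h' : W ω ≤ b <;> simp [h, h', sq_nonneg]
  -- key estimate: ‖g b − g a‖² ≤ F b − F a
  have key : ∀ a b : ℝ, a ≤ b → ‖g b - g a‖ ^ 2 ≤ F b - F a := by
    intro a b hab
    set h : Ω → H := fun ω =>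
      (if W ω ≤ b then X ω else 0) - (if W ω ≤ a then X ω else 0) with hh
    have hsub : g b - g a = ∫ ω, h ω ∂ℙ := by
      rw [hg, hg, ← integral_sub (hifX b) (hifX a)]
    have hnormsq : ∀ ω, ‖h ω‖ ^ 2 =
        (if W ω ≤ b then ‖X ω‖ ^ 2 else 0) - (if W ω ≤ a then ‖X ω‖ ^ 2 else 0) := by
      intro ω
      by_cases ha : W ω ≤ a
      · simp [hh, ha, ha.trans hab]
      · by_cases hb : W ω ≤ b <;> simp [hh, ha, hb]
    have hIh2 : Integrable (fun ω => ‖h ω‖ ^ 2) ℙ := by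
      have := (hif2 b).sub (hif2 a)
      refine this.congr (ae_of_all _ fun ω => ?_)
      exact (hnormsq ω).symm
    have hImeas : AEStronglyMeasurable (fun ω => ‖h ω‖) ℙ := by
      have : Measurable h := ((Measurable.ite (hset b) hX measurable_const).sub
        (Measurable.ite (hset a) hX measurable_const))
      exact this.norm.aestronglyMeasurable
    have h1 : ‖g b - g a‖ ≤ ∫ ω, ‖h ω‖ ∂ℙ := by
      rw [hsub]; exact norm_integral_le_integral_norm h
    have h2 : (∫ ω, ‖h ω‖ ∂ℙ) ^ 2 ≤ ∫ ω, ‖h ω‖ ^ 2 ∂ℙ :=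
      sq_integral_le_integral_sq' hImeas (fun ω => norm_nonneg _) hIh2
    have h3 : ∫ ω, ‖h ω‖ ^ 2 ∂ℙ = F b - F a := by
      rw [hF, hF, ← integral_sub (hif2 b) (hif2 a)]
      exact integral_congr_ae (ae_of_all _ hnormsq)
    calc ‖g b - g a‖ ^ 2 ≤ (∫ ω, ‖h ω‖ ∂ℙ) ^ 2 :=
          pow_le_pow_left₀ (norm_nonneg _) h1 2
      _ ≤ ∫ ω, ‖h ω‖ ^ 2 ∂ℙ := h2
      _ = F b - F a := h3
  have hA : ‖g u - g u₁‖ ^ 2 ≤ F u - F u₁ := key u₁ u h₁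
  have hB : ‖g u₂ - g u‖ ^ 2 ≤ F u₂ - F u := key u u₂ h₂
  have hΔ₁ : 0 ≤ F u - F u₁ := sub_nonneg.2 (hFmono _ _ h₁)
  have hΔ₂ : 0 ≤ F u₂ - F u := sub_nonneg.2 (hFmono _ _ h₂)
  have hED : 0 ≤ ∫ ω, ‖D ω‖ ^ 4 ∂ℙ := integral_nonneg fun ω => by positivity
  -- pointwise bound
  have hpt : ∀ ω, (T u ω - T u₁ ω) ^ 2 * (T u₂ ω - T u ω) ^ 2 ≤
      (F u - F u₁) * (F u₂ - F u) * ‖D ω‖ ^ 4 := by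
    intro ω
    have e1' : T u ω - T u₁ ω = ⟪g u - g u₁, D ω⟫ := by
      rw [hT, hT, ← inner_sub_left]
    have e2' : T u₂ ω - T u ω = ⟪g u₂ - g u, D ω⟫ := by
      rw [hT, hT, ← inner_sub_left]
    have c1 : ⟪g u - g u₁, D ω⟫ ^ 2 ≤ ‖g u - g u₁‖ ^ 2 * ‖D ω‖ ^ 2 := by
      have := abs_real_inner_le_norm (g u - g u₁) (D ω)
      nlinarith [abs_nonneg ⟪g u - g u₁, D ω⟫, sq_abs ⟪g u - g u₁, D ω⟫,
        norm_nonneg (g u - g u₁), norm_nonneg (D ω)]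
    have c2 : ⟪g u₂ - g u, D ω⟫ ^ 2 ≤ ‖g u₂ - g u‖ ^ 2 * ‖D ω‖ ^ 2 := by
      have := abs_real_inner_le_norm (g u₂ - g u) (D ω)
      nlinarith [abs_nonneg ⟪g u₂ - g u, D ω⟫, sq_abs ⟪g u₂ - g u, D ω⟫,
        norm_nonneg (g u₂ - g u), norm_nonneg (D ω)]
    have e1 : (T u ω - T u₁ ω) ^ 2 ≤ (F u - F u₁) * ‖D ω‖ ^ 2 := by
      rw [e1']
      calc ⟪g u - g u₁, D ω⟫ ^ 2 ≤ ‖g u - g u₁‖ ^ 2 * ‖D ω‖ ^ 2 := c1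
        _ ≤ (F u - F u₁) * ‖D ω‖ ^ 2 := by
            exact mul_le_mul_of_nonneg_right hA (sq_nonneg _)
    have e2 : (T u₂ ω - T u ω) ^ 2 ≤ (F u₂ - F u) * ‖D ω‖ ^ 2 := by
      rw [e2']
      calc ⟪g u₂ - g u, D ω⟫ ^ 2 ≤ ‖g u₂ - g u‖ ^ 2 * ‖D ω‖ ^ 2 := c2
        _ ≤ (F u₂ - F u) * ‖D ω‖ ^ 2 := by
            exact mul_le_mul_of_nonneg_right hB (sq_nonneg _)
    calc (T u ω - T u₁ ω) ^ 2 * (T u₂ ω - T u ω) ^ 2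
        ≤ ((F u - F u₁) * ‖D ω‖ ^ 2) * ((F u₂ - F u) * ‖D ω‖ ^ 2) :=
          mul_le_mul e1 e2 (sq_nonneg _) (by positivity)
      _ = (F u - F u₁) * (F u₂ - F u) * ‖D ω‖ ^ 4 := by ring
  constructor
  · have hInt : Integrable (fun ω => (F u - F u₁) * (F u₂ - F u) * ‖D ω‖ ^ 4) ℙ :=
      hD4.const_mul _
    have hmono : (∫ ω, (T u ω - T u₁ ω) ^ 2 * (T u₂ ω - T u ω) ^ 2 ∂ℙ)
        ≤ ∫ ω, (F u - F u₁) * (F u₂ - F u) * ‖D ω‖ ^ 4 ∂ℙ :=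
      integral_mono_of_nonneg (ae_of_all _ fun ω => by positivity) hInt
        (ae_of_all _ hpt)
    have hconst : ∫ ω, (F u - F u₁) * (F u₂ - F u) * ‖D ω‖ ^ 4 ∂ℙ
        = (F u - F u₁) * (F u₂ - F u) * ∫ ω, ‖D ω‖ ^ 4 ∂ℙ := by
      rw [integral_const_mul]
    rw [hconst] at hmono
    calc (∫ ω, (T u ω - T u₁ ω) ^ 2 * (T u₂ ω - T u ω) ^ 2 ∂ℙ)
        ≤ (F u - F u₁) * (F u₂ - F u) * ∫ ω, ‖D ω‖ ^ 4 ∂ℙ := hmono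
      _ = (∫ ω, ‖D ω‖ ^ 4 ∂ℙ) * (F u - F u₁) * (F u₂ - F u) := by ring
  · have hprod : (F u - F u₁) * (F u₂ - F u) ≤ (F u₂ - F u₁) ^ 2 := by
      nlinarith [hΔ₁, hΔ₂]
    calc (∫ ω, ‖D ω‖ ^ 4 ∂ℙ) * (F u - F u₁) * (F u₂ - F u)
        = (∫ ω, ‖D ω‖ ^ 4 ∂ℙ) * ((F u - F u₁) * (F u₂ - F u)) := by ring
      _ ≤ (∫ ω, ‖D ω‖ ^ 4 ∂ℙ) * (F u₂ - F u₁) ^ 2 :=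
          mul_le_mul_of_nonneg_left hprod hED
end
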